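/- arXiv:1707.00241 — 7 statements merged into one kernel-verified Lean document; each statement's English description precedes it below -/
import Mathlib

section
/- Let n be squarefree with prime factorization n = p₁ p₂ ⋯ p_k. Then Pgr(ℤ/n) is isomorphic to the product of symmetric groups S_{p₁} × ⋯ × S_{p_k}. In particular |Pgr(ℤ/n)| = p₁! ⋯ p_k!. -/
def PolyPerms (R : Type*) [CommRing R] : Set (Equiv.Perm R) :=
  {σ | ∃ f : Polynomial R, ∀ x, σ x = f.eval x}

def Pgr (R : Type*) [CommRing R] : Subgroup (Equiv.Perm R) :=
  Subgroup.closure (PolyPerms R)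

open Polynomial Equiv

/-- `Equiv.permCongr` as a `MulEquiv`. -/
def permCongrMul {α β : Type*} (e : α ≃ β) : Equiv.Perm α ≃* Equiv.Perm β where
  toEquiv := e.permCongr
  map_mul' p q := by
    ext x
    simp [Equiv.permCongr_apply, Equiv.Perm.mul_apply]

lemma eval_map_apply' {R S : Type*} [CommRing R] [CommRing S] (g : R →+* S)
    (f : Polynomial R) (x : R) : (f.map g).eval (g x) = g (f.eval x) := by
  rw [Polynomial.eval_map, Polynomial.eval₂_at_apply]

lemma polyPerms_map_subset {R S : Type*} [CommRing R] [CommRing S] (e : R ≃+* S) :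
    permCongrMul e.toEquiv '' PolyPerms R ⊆ PolyPerms S := by
  rintro _ ⟨σ, ⟨f, hf⟩, rfl⟩
  refine ⟨f.map (e : R →+* S), fun x => ?_⟩
  show e (σ (e.symm x)) = _
  rw [hf]
  have := eval_map_apply' (e : R →+* S) f (e.symm x)
  simpa using this.symm

lemma polyPerms_map_eq {R S : Type*} [CommRing R] [CommRing S] (e : R ≃+* S) :
    permCongrMul e.toEquiv '' PolyPerms R = PolyPerms S := by
  apply Set.Subset.antisymm (polyPerms_map_subset e)
  intro τ hτ
  refine ⟨permCongrMul e.symm.toEquiv τ, ?_, ?_⟩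
  · exact polyPerms_map_subset e.symm ⟨τ, hτ, rfl⟩
  · ext x
    simp [permCongrMul, Equiv.permCongr_apply]

lemma pgr_map_eq {R S : Type*} [CommRing R] [CommRing S] (e : R ≃+* S) :
    Subgroup.map (permCongrMul e.toEquiv).toMonoidHom (Pgr R) = Pgr S := by
  rw [Pgr, Pgr, MonoidHom.map_closure, MulEquiv.coe_toMonoidHom, polyPerms_map_eq e]

/-- `Pgr` is functorial in ring isomorphisms. -/
noncomputable def pgrCongr {R S : Type*} [CommRing R] [CommRing S] (e : R ≃+* S) :
    Pgr R ≃* Pgr S :=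
  ((permCongrMul e.toEquiv).subgroupMap (Pgr R)).trans
    (MulEquiv.subgroupCongr (pgr_map_eq e))

/-- Componentwise permutations of a product, as a monoid hom into `Perm` of the product. -/
def piPermHom {ι : Type*} (α : ι → Type*) :
    (∀ i, Equiv.Perm (α i)) →* Equiv.Perm (∀ i, α i) where
  toFun σ := Equiv.piCongrRight σ
  map_one' := by ext x; rfl
  map_mul' σ τ := by ext x; rfl

lemma piPermHom_injective {ι : Type*} (α : ι → Type*) [∀ i, Nonempty (α i)] :
    Function.Injective (piPermHom α) := by
  classical
  intro σ τ h
  funext i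
  ext a
  have := congrArg (fun (e : Equiv.Perm (∀ i, α i)) =>
    e (Function.update (fun j => Classical.arbitrary (α j)) i a) i) h
  simpa [piPermHom, Function.update_self] using this

/-- Every function on a finite field is given by a polynomial. -/
lemma exists_poly_of_fn {F : Type*} [Field F] [Fintype F] [DecidableEq F] (g : F → F) :
    ∃ f : Polynomial F, ∀ x, g x = f.eval x := by
  refine ⟨Lagrange.interpolate Finset.univ id g, fun x => ?_⟩
  have := Lagrange.eval_interpolate_at_node (v := id) (r := g)
    (Set.injOn_id _) (Finset.mem_univ x)
  simpa using this.symm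

section Pi

variable {ι : Type*} [Fintype ι] (F : ι → Type*) [∀ i, Field (F i)]
  [∀ i, Fintype (F i)] [∀ i, DecidableEq (F i)]

lemma polyPerms_pi_eq :
    PolyPerms (∀ i, F i) = Set.range (piPermHom F) := by
  classical
  ext σ
  constructor
  · rintro ⟨f, hf⟩
    set g : ∀ i, F i → F i := fun i y => (f.map (Pi.evalRingHom F i)).eval y with hg
    have key : ∀ x i, σ x i = g i (x i) := by
      intro x i
      have := eval_map_apply' (Pi.evalRingHom F i) f x
      rw [hf]
      exact this.symm
    have hbij : ∀ i, Function.Bijective (g i) := by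
      intro i
      refine Finite.injective_iff_bijective.mp ?_
      intro a b hab
      have hx : σ (Function.update (fun j => (0 : F j)) i a) =
          σ (Function.update (fun j => (0 : F j)) i b) := by
        funext j
        rw [key, key]
        by_cases hij : j = i
        · subst hij; simpa [Function.update_self] using hab
        · simp [Function.update_of_ne hij]
      have := σ.injective hx
      have := congrFun this i
      simpa [Function.update_self] using this
    refine ⟨fun i => Equiv.ofBijective (g i) (hbij i), ?_⟩
    ext x i
    exact (key x i).symm
  · rintro ⟨σ, rfl⟩
    choose f hf using fun i => exists_poly_of_fn (fun y => σ i y)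
    set N := (Finset.univ.sup fun i => (f i).natDegree) + 1 with hN
    refine ⟨∑ k ∈ Finset.range N, C (fun i => (f i).coeff k) * X ^ k, fun x => ?_⟩
    funext i
    have hdeg : (f i).natDegree < N :=
      Nat.lt_succ_of_le (Finset.le_sup (f := fun i => (f i).natDegree) (Finset.mem_univ i))
    show σ i (x i) = _
    rw [hf i (x i), Polynomial.eval_eq_sum_range' hdeg (x i),
      Polynomial.eval_finset_sum]
    simp [Finset.sum_apply]

lemma pgr_pi_eq : Pgr (∀ i, F i) = (piPermHom F).range := by
  rw [Pgr, polyPerms_pi_eq, ← MonoidHom.coe_range, Subgroup.closure_eq]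

/-- For a finite product of finite fields, `Pgr` is the product of symmetric groups. -/
noncomputable def pgrPiEquiv : Pgr (∀ i, F i) ≃* ∀ i, Equiv.Perm (F i) :=
  ((MulEquiv.subgroupCongr (pgr_pi_eq F)).trans
    (MonoidHom.ofInjective (piPermHom_injective F)).symm)

end Pi

/-- For squarefree `n`, `Pgr (ℤ/n)` is the product of the symmetric groups on its prime factors. -/
theorem stmt5 (n : ℕ) (hn : Squarefree n) :
    Nonempty (Pgr (ZMod n) ≃* ∀ q : n.primeFactors, Equiv.Perm (ZMod (q : ℕ))) ∧
    Nat.card (Pgr (ZMod n)) = ∏ q ∈ n.primeFactors, Nat.factorial q := by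
  classical
  haveI : ∀ i : n.primeFactors, Fact (Nat.Prime (i : ℕ)) :=
    fun i => ⟨Nat.prime_of_mem_primeFactors i.2⟩
  have hcop : Pairwise (Function.onFun Nat.Coprime fun i : n.primeFactors => (i : ℕ)) := by
    intro i j hij
    exact (Nat.coprime_primes (Fact.out) (Fact.out)).mpr
      (fun h => hij (Subtype.ext h))
  have hprod : (∏ i : n.primeFactors, (i : ℕ)) = n :=
    (Finset.prod_coe_sort n.primeFactors id).trans (Nat.prod_primeFactors_of_squarefree hn)
  let e : ZMod n ≃+* ∀ i : n.primeFactors, ZMod (i : ℕ) :=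
    (ZMod.ringEquivCongr hprod.symm).trans (ZMod.prodEquivPi _ hcop)
  let E : Pgr (ZMod n) ≃* ∀ i : n.primeFactors, Equiv.Perm (ZMod (i : ℕ)) :=
    (pgrCongr e).trans (pgrPiEquiv _)
  refine ⟨⟨E⟩, ?_⟩
  have h2 : ∀ i : n.primeFactors, Nat.card (Equiv.Perm (ZMod (i : ℕ))) = Nat.factorial i :=
    fun i => by rw [Nat.card_eq_fintype_card, Fintype.card_perm, ZMod.card]
  calc Nat.card (Pgr (ZMod n))
      = ∏ i : n.primeFactors, Nat.card (Equiv.Perm (ZMod (i : ℕ))) := by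
        rw [Nat.card_congr E.toEquiv, Nat.card_pi]
    _ = ∏ i : n.primeFactors, Nat.factorial (i : ℕ) :=
        Finset.prod_congr rfl fun i _ => h2 i
    _ = ∏ q ∈ n.primeFactors, Nat.factorial q :=
        Finset.prod_coe_sort n.primeFactors (fun q => Nat.factorial q)
end

section
/- If n > 6 is squarefree and not prime, then Pgr(ℤ/n) is a proper subgroup of the symmetric group on ℤ/n. -/
/-- For squarefree non-prime `n > 6`, `Pgr (ℤ/n)` is a proper subgroup of the symmetric group. -/
theorem stmt6 (n : ℕ) (h6 : 6 < n) (hsf : Squarefree n) (hnp : ¬ n.Prime) :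
    Pgr (ZMod n) < ⊤ := by
  have hn0 : n ≠ 0 := by omega
  haveI : NeZero n := ⟨hn0⟩
  set p := n.minFac with hpdef
  have hp : p.Prime := Nat.minFac_prime (by omega)
  haveI : Fact p.Prime := ⟨hp⟩
  have hdvd : p ∣ n := n.minFac_dvd
  have hpltn : p < n := by
    rcases lt_or_eq_of_le (Nat.le_of_dvd (by omega) hdvd) with h | h
    · exact h
    · exact absurd (h ▸ hp) hnp
  have hp2 : 2 ≤ p := hp.two_le
  let φ : ZMod n →+* ZMod p := ZMod.castHom hdvd (ZMod p)
  let H : Subgroup (Equiv.Perm (ZMod n)) :=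
  { carrier := {σ | ∀ x y, φ x = φ y ↔ φ (σ x) = φ (σ y)}
    one_mem' := fun x y => Iff.rfl
    mul_mem' := by
      intro a b ha hb x y
      exact (hb x y).trans (ha (b x) (b y))
    inv_mem' := by
      intro a ha x y
      have := ha (a⁻¹ x) (a⁻¹ y)
      simpa [Equiv.Perm.inv_def] using this.symm }
  have hsub : Pgr (ZMod n) ≤ H := by
    apply (Subgroup.closure_le H).2
    rintro σ ⟨f, hf⟩
    have fwd : ∀ x y : ZMod n, φ x = φ y → φ (σ x) = φ (σ y) := by
      intro x y hxy
      rw [hf, hf, ← Polynomial.eval₂_at_apply φ, ← Polynomial.eval₂_at_apply φ, hxy]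
    have hφs : Function.Surjective φ := fun z =>
      ⟨((z.val : ℕ) : ZMod n), by
        simp only [φ, ZMod.castHom_apply, map_natCast]
        exact ZMod.natCast_rightInverse z⟩
    set s := Function.surjInv hφs with hs
    set g : ZMod p → ZMod p := fun z => φ (σ (s z)) with hgdef
    have hg : ∀ x, g (φ x) = φ (σ x) := fun x =>
      fwd _ _ (Function.surjInv_eq hφs (φ x))
    have hgs : Function.Surjective g := by
      intro z
      obtain ⟨w, hw⟩ := hφs z
      obtain ⟨u, hu⟩ := σ.surjective w
      exact ⟨φ u, by rw [hg, hu, hw]⟩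
    have hgi : Function.Injective g := Finite.injective_iff_surjective.mpr hgs
    intro x y
    constructor
    · exact fwd x y
    · intro h
      apply hgi
      rw [hg, hg, h]
  have hswap : Equiv.swap (0 : ZMod n) 1 ∉ H := by
    intro hmem
    have h01 := hmem 0 (p : ZMod n)
    have hφp : φ ((p : ZMod n)) = 0 := by
      simp [φ, map_natCast]
    have hp0 : ((p : ZMod n)) ≠ 0 := by
      rw [Ne, ZMod.natCast_eq_zero_iff]
      intro hcon
      have := Nat.le_of_dvd (by omega) hcon
      omega
    haveI : Fact (1 < n) := ⟨by omega⟩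
    have hp1 : ((p : ZMod n)) ≠ 1 := by
      intro hcon
      have h1 : ((p : ZMod n)).val = p := ZMod.val_cast_of_lt hpltn
      rw [hcon, ZMod.val_one] at h1
      omega
    have hs0 : Equiv.swap (0 : ZMod n) 1 0 = 1 := Equiv.swap_apply_left 0 1
    have hsp : Equiv.swap (0 : ZMod n) 1 (p : ZMod n) = (p : ZMod n) :=
      Equiv.swap_apply_of_ne_of_ne hp0 hp1
    rw [hs0, hsp, map_zero, hφp, map_one] at h01
    exact one_ne_zero (h01.mp rfl)
  rw [lt_top_iff_ne_top]
  intro htop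
  exact hswap (hsub (htop ▸ Subgroup.mem_top _))
end

section
/- The polypermutation group of ℤ/4 has order 8 and is isomorphic to the dihedral group D₄ of order 8, generated by the permutations induced by x + 1 (the 4-cycle (0,1,2,3)) and by x⁴ + x² + x (the transposition (1,3)). -/
namespace Stmt7Aux

/-- The permutation `x ↦ i - x` of `ZMod 4`. -/
def Sg (i : ZMod 4) : Equiv.Perm (ZMod 4) :=
  ⟨fun x => i - x, fun x => i - x, fun x => sub_sub_cancel i x, fun x => sub_sub_cancel i x⟩

@[simp] lemma Sg_apply (i x : ZMod 4) : Sg i x = i - x := rfl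

lemma x4 : ∀ x : ZMod 4, x ^ 4 = x ^ 2 := by decide

lemma b_eq : Equiv.swap (1 : ZMod 4) 3 = Sg 0 := by
  ext x; fin_cases x <;> decide

lemma inj_form : ∀ c0 c1 c2 c3 : ZMod 4,
    Function.Injective (fun x : ZMod 4 => c0 + c1*x + c2*x^2 + c3*x^3) →
    (∀ x : ZMod 4, c0 + c1*x + c2*x^2 + c3*x^3 = x + c0) ∨
    (∀ x : ZMod 4, c0 + c1*x + c2*x^2 + c3*x^3 = c0 - x) := by decide

lemma pow_reduce : ∀ n : ℕ, ∃ m, m < 4 ∧ ∀ x : ZMod 4, x ^ n = x ^ m := by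
  intro n
  induction n using Nat.strong_induction_on with
  | _ n ih =>
    rcases lt_or_ge n 4 with h | h
    · exact ⟨n, h, fun _ => rfl⟩
    · obtain ⟨k, rfl⟩ := Nat.exists_eq_add_of_le h
      obtain ⟨m, hm, he⟩ := ih (k + 2) (by omega)
      refine ⟨m, hm, fun x => ?_⟩
      rw [← he x, show 4 + k = k + 4 by ring, pow_add, pow_add, x4]

lemma poly_reduce (f : Polynomial (ZMod 4)) :
    ∃ c0 c1 c2 c3 : ZMod 4, ∀ x, f.eval x = c0 + c1*x + c2*x^2 + c3*x^3 := by
  induction f using Polynomial.induction_on with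
  | C a => exact ⟨a, 0, 0, 0, fun x => by simp⟩
  | add p q hp hq =>
    obtain ⟨a0,a1,a2,a3,ha⟩ := hp; obtain ⟨b0,b1,b2,b3,hb⟩ := hq
    exact ⟨a0+b0, a1+b1, a2+b2, a3+b3, fun x => by simp [ha, hb]; ring⟩
  | monomial n a _ =>
    obtain ⟨m, hm, he⟩ := pow_reduce (n+1)
    interval_cases m
    · exact ⟨a, 0, 0, 0, fun x => by simp [he x]⟩
    · exact ⟨0, a, 0, 0, fun x => by simp [he x]⟩
    · exact ⟨0, 0, a, 0, fun x => by simp [he x]⟩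
    · exact ⟨0, 0, 0, a, fun x => by simp [he x]⟩

lemma a_pow (n : ℕ) :
    (Equiv.addRight (1 : ZMod 4)) ^ n = Equiv.addRight (n : ZMod 4) := by
  induction n with
  | zero => ext x; simp
  | succ k ih => ext x; simp [pow_succ, ih, Equiv.Perm.mul_apply]; ring

lemma a_pow_val (i : ZMod 4) :
    (Equiv.addRight (1 : ZMod 4)) ^ i.val = Equiv.addRight i := by
  rw [a_pow]; congr 1; simp [ZMod.natCast_val, ZMod.cast_id]

/-- The subgroup generated by the two permutations. -/
def H : Subgroup (Equiv.Perm (ZMod 4)) :=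
  Subgroup.closure {Equiv.addRight (1 : ZMod 4), Equiv.swap 1 3}

lemma addRight_mem (i : ZMod 4) : Equiv.addRight i ∈ H := by
  rw [← a_pow_val]
  exact pow_mem (Subgroup.subset_closure (Set.mem_insert _ _)) _

lemma Sg_mem (i : ZMod 4) : Sg i ∈ H := by
  have h : Sg i = Equiv.addRight i * Equiv.swap (1 : ZMod 4) 3 := by
    ext x; simp [b_eq, Equiv.Perm.mul_apply]; ring
  rw [h]
  exact mul_mem (addRight_mem i)
    (Subgroup.subset_closure (Set.mem_insert_of_mem _ rfl))

/-- The embedding of the dihedral group of order 8 into `Perm (ZMod 4)`. -/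
def phi : DihedralGroup 4 →* Equiv.Perm (ZMod 4) where
  toFun g := match g with
    | DihedralGroup.r i => Equiv.addRight (-i)
    | DihedralGroup.sr i => Sg i
  map_one' := by
    rw [show (1 : DihedralGroup 4) = DihedralGroup.r 0 from rfl]
    ext x; simp
  map_mul' := by
    rintro (i | i) (j | j) <;> ext x <;>
      simp [Equiv.Perm.mul_apply] <;> ring

lemma phi_injective : Function.Injective phi := by
  rintro (i | i) (j | j) h
  · have h0 := congrArg (fun σ : Equiv.Perm (ZMod 4) => σ 0) h
    simp [phi] at h0
    simp [h0]
  · have h0 := congrArg (fun σ : Equiv.Perm (ZMod 4) => σ 0) h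
    have h1 := congrArg (fun σ : Equiv.Perm (ZMod 4) => σ 1) h
    simp [phi] at h0 h1
    rw [← h0] at h1
    exact absurd (by linear_combination h1 : (1 : ZMod 4) = -1) (by decide)
  · have h0 := congrArg (fun σ : Equiv.Perm (ZMod 4) => σ 0) h
    have h1 := congrArg (fun σ : Equiv.Perm (ZMod 4) => σ 1) h
    simp [phi] at h0 h1
    rw [h0] at h1
    exact absurd (by linear_combination -h1 : (1 : ZMod 4) = -1) (by decide)
  · have h0 := congrArg (fun σ : Equiv.Perm (ZMod 4) => σ 0) h
    simp [phi] at h0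
    simp [h0]

lemma phi_range : phi.range = H := by
  apply le_antisymm
  · rintro σ ⟨g, rfl⟩
    rcases g with i | i
    · exact addRight_mem (-i)
    · exact Sg_mem i
  · rw [H]
    apply Subgroup.closure_le _ |>.mpr
    rintro σ (rfl | rfl)
    · exact ⟨DihedralGroup.r (-1), by ext x; simp [phi]⟩
    · exact ⟨DihedralGroup.sr 0, by rw [b_eq]; rfl⟩

lemma Pgr_eq : Pgr (ZMod 4) = H := by
  apply le_antisymm
  · apply Subgroup.closure_le _ |>.mpr
    rintro σ ⟨f, hf⟩
    obtain ⟨c0, c1, c2, c3, hc⟩ := poly_reduce f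
    have hσ : ∀ x, σ x = c0 + c1*x + c2*x^2 + c3*x^3 := fun x => (hf x).trans (hc x)
    have hinj : Function.Injective (fun x : ZMod 4 => c0 + c1*x + c2*x^2 + c3*x^3) := by
      have : (fun x : ZMod 4 => c0 + c1*x + c2*x^2 + c3*x^3) = ⇑σ := by
        funext x; exact (hσ x).symm
      rw [this]; exact σ.injective
    rcases inj_form c0 c1 c2 c3 hinj with hform | hform
    · have : σ = Equiv.addRight c0 := by
        ext x; simp [hσ x, hform x]
      rw [this]; exact addRight_mem c0
    · have : σ = Sg c0 := by
        ext x; simp [hσ x, hform x]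
      rw [this]; exact Sg_mem c0
  · rw [H]
    apply Subgroup.closure_le _ |>.mpr
    rintro σ (rfl | rfl)
    · exact Subgroup.subset_closure ⟨Polynomial.X + 1, fun x => by simp⟩
    · exact Subgroup.subset_closure
        ⟨Polynomial.X ^ 4 + Polynomial.X ^ 2 + Polynomial.X, fun x => by simp only [Polynomial.eval_add, Polynomial.eval_pow, Polynomial.eval_X]; revert x; decide⟩

noncomputable def theEquiv : H ≃* DihedralGroup 4 :=
  (MulEquiv.subgroupCongr phi_range.symm).trans (MonoidHom.ofInjective phi_injective).symm

end Stmt7Aux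

open Stmt7Aux in
/-- `Pgr (ℤ/4)` has order 8, is dihedral of order 8, and is generated by the permutation
`(0,1,2,3)` induced by `x + 1` and the transposition `(1,3)` induced by `x⁴ + x² + x`. -/
theorem stmt7 :
    Nat.card (Pgr (ZMod 4)) = 8 ∧
    Nonempty (Pgr (ZMod 4) ≃* DihedralGroup 4) ∧
    (∀ x : ZMod 4, Equiv.addRight (1 : ZMod 4) x =
      (Polynomial.X + 1 : Polynomial (ZMod 4)).eval x) ∧
    (∀ x : ZMod 4, Equiv.swap (1 : ZMod 4) 3 x =
      (Polynomial.X ^ 4 + Polynomial.X ^ 2 + Polynomial.X : Polynomial (ZMod 4)).eval x) ∧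
    Pgr (ZMod 4) = Subgroup.closure {Equiv.addRight (1 : ZMod 4), Equiv.swap 1 3} := by
  have hiso : Nonempty (Pgr (ZMod 4) ≃* DihedralGroup 4) := by
    rw [Pgr_eq]; exact ⟨theEquiv⟩
  refine ⟨?_, hiso, fun x => by simp, fun x => by simp only [Polynomial.eval_add, Polynomial.eval_pow, Polynomial.eval_X]; revert x; decide, Pgr_eq⟩
  obtain ⟨e⟩ := hiso
  rw [Nat.card_congr e.toEquiv, Nat.card_eq_fintype_card, DihedralGroup.card]
end

section
/- Let p be prime, k ≥ 2, and let f ∈ (ℤ/p^k)[x]. If f induces a permutation of ℤ/p^k, then the values f(0), …, f(p−1) are pairwise distinct modulo p and the derivative values f'(0), …, f'(p−1) are units in ℤ/p^k. -/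
/-- If `f` induces a permutation of `ℤ/p^k` (`k ≥ 2`), then `f(0), …, f(p-1)` are pairwise
distinct modulo `p` and `f'(0), …, f'(p-1)` are units in `ℤ/p^k`. -/
theorem stmt13 (p k : ℕ) (hp : p.Prime) (hk : 2 ≤ k)
    (f : Polynomial (ZMod (p ^ k)))
    (hf : Function.Bijective fun x => f.eval x) :
    (∀ i j : Fin p,
      ZMod.castHom (dvd_pow_self p (by omega : k ≠ 0)) (ZMod p) (f.eval ((i : ℕ) : ZMod (p ^ k))) =
        ZMod.castHom (dvd_pow_self p (by omega : k ≠ 0)) (ZMod p)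
          (f.eval ((j : ℕ) : ZMod (p ^ k))) → i = j) ∧
    (∀ i : Fin p, IsUnit (f.derivative.eval ((i : ℕ) : ZMod (p ^ k)))) := by
  haveI : Fact p.Prime := ⟨hp⟩
  haveI : NeZero (p ^ k) := ⟨(pow_pos hp.pos k).ne'⟩
  set φ := ZMod.castHom (dvd_pow_self p (by omega : k ≠ 0)) (ZMod p) with hφ
  have key : ∀ a b : ZMod (p ^ k), φ a = φ b → φ (f.eval a) = φ (f.eval b) := by
    intro a b hab
    have h1 := Polynomial.eval₂_at_apply (p := f) (φ : ZMod (p ^ k) →+* ZMod p) a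
    have h2 := Polynomial.eval₂_at_apply (p := f) (φ : ZMod (p ^ k) →+* ZMod p) b
    rw [← h1, ← h2, hab]
  have hlift : ∀ y : ZMod p, φ ((y.val : ℕ) : ZMod (p ^ k)) = y := by
    intro y
    simp [map_natCast, ZMod.natCast_val, ZMod.cast_id]
  -- the induced map mod p
  set g : ZMod p → ZMod p := fun y => φ (f.eval ((y.val : ℕ) : ZMod (p ^ k))) with hg
  have hgsurj : Function.Surjective g := by
    intro z
    obtain ⟨x, hx⟩ := hf.2 ((z.val : ℕ) : ZMod (p ^ k))
    refine ⟨φ x, ?_⟩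
    have h1 : φ (((φ x).val : ℕ) : ZMod (p ^ k)) = φ x := hlift (φ x)
    have h2 := key _ _ h1
    show φ (f.eval (((φ x).val : ℕ) : ZMod (p ^ k))) = z
    rw [h2]
    simp only at hx
    rw [hx, hlift]
  have hginj : Function.Injective g := Finite.injective_iff_surjective.mpr hgsurj
  constructor
  · intro i j hij
    have hi : g ((i : ℕ) : ZMod p) = φ (f.eval ((i : ℕ) : ZMod (p ^ k))) := by
      apply key
      rw [hlift, map_natCast]
    have hj : g ((j : ℕ) : ZMod p) = φ (f.eval ((j : ℕ) : ZMod (p ^ k))) := by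
      apply key
      rw [hlift, map_natCast]
    have : ((i : ℕ) : ZMod p) = ((j : ℕ) : ZMod p) := hginj (by rw [hi, hj, hij])
    have hv : (i : ℕ) % p = (j : ℕ) % p := by
      have := congrArg ZMod.val this
      rwa [ZMod.val_natCast, ZMod.val_natCast] at this
    have hi2 := i.2; have hj2 := j.2
    rw [Nat.mod_eq_of_lt hi2, Nat.mod_eq_of_lt hj2] at hv
    exact Fin.ext hv
  · intro i
    by_contra hu
    set x : ZMod (p ^ k) := ((i : ℕ) : ZMod (p ^ k)) with hx
    set a := f.derivative.eval x with ha
    -- p divides a.val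
    have hdvd : p ∣ a.val := by
      by_contra hpd
      apply hu
      have hcop : Nat.Coprime a.val p := (Nat.coprime_comm.mp (hp.coprime_iff_not_dvd.mpr hpd))
      have : IsUnit ((a.val : ℕ) : ZMod (p ^ k)) :=
        (ZMod.isUnit_iff_coprime a.val (p ^ k)).mpr (hcop.pow_right k)
      rwa [ZMod.natCast_val, ZMod.cast_id] at this
    obtain ⟨b, hb⟩ := hdvd
    set m : ZMod (p ^ k) := ((p ^ (k - 1) : ℕ) : ZMod (p ^ k)) with hm
    have ham : a * m = 0 := by
      have : a = ((a.val : ℕ) : ZMod (p ^ k)) := by rw [ZMod.natCast_val, ZMod.cast_id]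
      rw [this, hm, ← Nat.cast_mul, ZMod.natCast_eq_zero_iff]
      rw [hb]
      have hpow : p ^ (k - 1) * p = p ^ k := by
        rw [← pow_succ]; congr 1; omega
      have : p * b * p ^ (k - 1) = p ^ k * b := by
        rw [mul_comm (p * b), ← mul_assoc, hpow]
      rw [this]
      exact Dvd.intro b rfl
    have hm2 : m ^ 2 = 0 := by
      rw [hm, ← Nat.cast_pow, ZMod.natCast_eq_zero_iff, ← pow_mul]
      exact pow_dvd_pow p (by omega)
    obtain ⟨c, hc⟩ := f.binomExpansion x m
    have heq : f.eval (x + m) = f.eval x := by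
      rw [hc, ham, hm2, mul_zero, add_zero, add_zero]
    have hxm : x + m = x := hf.1 heq
    have hm0 : m = 0 := by
      have h := hxm
      rwa [add_eq_left] at h
    rw [hm, ZMod.natCast_eq_zero_iff] at hm0
    have h1 : p ^ k ≤ p ^ (k - 1) := Nat.le_of_dvd (pow_pos hp.pos _) hm0
    have h2 : p ^ (k - 1) < p ^ k := Nat.pow_lt_pow_right hp.one_lt (by omega)
    omega
end

section
/- Let p be a prime and k ≥ 2 an integer with p ≥ k. Then the number of permutations of ℤ/p^k induced by polynomials in (ℤ/p^k)[x] equals p! · [(p−1) · p^{(k²+k−4)/2}]^p. -/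
open Finset Polynomial

namespace S15

variable (p k : ℕ)

def pr (x : ZMod (p ^ k)) : ZMod p := (x.val : ZMod p)

def mu (x : ZMod (p ^ k)) : ZMod (p ^ k) := ((x.val / p : ℕ) : ZMod (p ^ k))

abbrev Data :=
  {c : Fin p → ZMod (p ^ k) // Function.Injective fun r => pr p k (c r)} ×
  (Fin p → (ZMod (p ^ (k - 1)))ˣ) ×
  (Fin p → (j : Fin (k - 2)) → ZMod (p ^ (k - 2 - j.val)))

def Bd (d : Data p k) (r : Fin p) (i : ℕ) : ZMod (p ^ k) :=
  if i = 0 then d.1.1 r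
  else if i = 1 then (((d.2.1 r : ZMod (p ^ (k - 1))).val : ℕ) : ZMod (p ^ k))
  else if h : i - 2 < k - 2 then (((d.2.2 r ⟨i - 2, h⟩).val : ℕ) : ZMod (p ^ k))
  else 0

def rfin (hp : 0 < p) (x : ZMod (p ^ k)) : Fin p := ⟨x.val % p, Nat.mod_lt _ hp⟩

def Phi (hp : 0 < p) (d : Data p k) (x : ZMod (p ^ k)) : ZMod (p ^ k) :=
  ∑ i ∈ range k, (p : ZMod (p ^ k)) ^ i * mu p k x ^ i * Bd p k d (rfin p k hp x) i

section Basic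

variable {p k : ℕ}

lemma pk_pos (hp : p.Prime) : 0 < p ^ k := pow_pos hp.pos k

lemma cast_self_eq (hp : p.Prime) (x : ZMod (p ^ k)) :
    ((x.val : ℕ) : ZMod (p ^ k)) = x := by
  haveI : NeZero (p ^ k) := ⟨(pk_pos hp).ne'⟩
  exact ZMod.natCast_rightInverse x

lemma p_pow_k_cast (hp : p.Prime) : (p : ZMod (p ^ k)) ^ k = 0 := by
  have : (((p ^ k : ℕ) : ZMod (p ^ k))) = 0 := ZMod.natCast_self _
  push_cast at this
  exact this

lemma x_decomp (hp : p.Prime) (x : ZMod (p ^ k)) :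
    x = ((x.val % p : ℕ) : ZMod (p ^ k)) + p * mu p k x := by
  conv_lhs => rw [← cast_self_eq hp x]
  rw [mu]
  conv_lhs => rw [← Nat.mod_add_div x.val p]
  push_cast
  ring

private lemma cancel_aux (hp : p.Prime) {i s t : ℕ} (hik : i ≤ k) (ht : t < p ^ (k - i))
    (hst : s ≤ t)
    (h : p ^ i * s ≡ p ^ i * t [MOD p ^ k]) : s = t := by
  have hd := h.dvd
  have hpi : ((p : ℤ) ^ i) ≠ 0 := pow_ne_zero _ (by exact_mod_cast hp.ne_zero)
  have hsplit : (p : ℤ) ^ k = p ^ i * p ^ (k - i) := by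
    rw [← pow_add]; congr 1; omega
  have hd2 : (p : ℤ) ^ i * (p : ℤ) ^ (k - i) ∣ (p : ℤ) ^ i * ((t : ℤ) - (s : ℤ)) := by
    rw [← hsplit]
    have he : ((p ^ i * t : ℕ) : ℤ) - ((p ^ i * s : ℕ) : ℤ) = (p : ℤ) ^ i * ((t : ℤ) - s) := by
      push_cast; ring
    rw [← he]
    exact_mod_cast hd
  have hd3 : (p : ℤ) ^ (k - i) ∣ (t : ℤ) - (s : ℤ) := (mul_dvd_mul_iff_left hpi).mp hd2
  have hd4 : ((p ^ (k - i) : ℕ) : ℤ) ∣ (((t - s : ℕ)) : ℤ) := by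
    push_cast [Nat.cast_sub hst]
    exact_mod_cast hd3
  have hdvd : p ^ (k - i) ∣ t - s := by exact_mod_cast hd4
  have := Nat.eq_zero_of_dvd_of_lt hdvd (by omega)
  omega

lemma cancel (hp : p.Prime) {i s t : ℕ} (hik : i ≤ k) (hs : s < p ^ (k - i))
    (ht : t < p ^ (k - i))
    (h : (p : ZMod (p ^ k)) ^ i * (s : ZMod (p ^ k)) = (p : ZMod (p ^ k)) ^ i * t) : s = t := by
  have h' : ((p ^ i * s : ℕ) : ZMod (p ^ k)) = ((p ^ i * t : ℕ) : ZMod (p ^ k)) := by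
    push_cast; exact h
  rw [ZMod.natCast_eq_natCast_iff] at h'
  rcases le_total s t with hst | hst
  · exact cancel_aux hp hik ht hst h'
  · exact (cancel_aux hp hik hs hst h'.symm).symm

lemma mod_absorb (hp : p.Prime) {i : ℕ} (hik : i ≤ k) (z : ZMod (p ^ k)) :
    (p : ZMod (p ^ k)) ^ i * ((z.val % p ^ (k - i) : ℕ) : ZMod (p ^ k)) =
      (p : ZMod (p ^ k)) ^ i * z := by
  conv_rhs => rw [← cast_self_eq hp z]
  conv_rhs => rw [show z.val = p ^ (k - i) * (z.val / p ^ (k - i)) + z.val % p ^ (k - i) from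
    (Nat.div_add_mod _ _).symm]
  have hz : (p : ZMod (p ^ k)) ^ i * (p : ZMod (p ^ k)) ^ (k - i) = 0 := by
    rw [← pow_add, show i + (k - i) = k from by omega, p_pow_k_cast hp]
  push_cast
  linear_combination (-(((z.val / p ^ (k - i) : ℕ)) : ZMod (p ^ k))) * hz

end Basic

section Part2

variable {p k : ℕ}

lemma pr_natCast (hp : p.Prime) (hk : 2 ≤ k) (n : ℕ) :
    pr p k ((n : ℕ) : ZMod (p ^ k)) = (n : ZMod p) := by
  rw [pr, ZMod.val_natCast, ZMod.natCast_eq_natCast_iff']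
  exact Nat.mod_mod_of_dvd n (dvd_pow_self p (by omega))

lemma pr_eq_zero_iff (z : ZMod (p ^ k)) :
    pr p k z = 0 ↔ p ∣ z.val := by
  rw [pr, ZMod.natCast_eq_zero_iff]

lemma isUnit_iff_not_dvd (hp : p.Prime) (hk : 2 ≤ k) (z : ZMod (p ^ k)) :
    IsUnit z ↔ ¬ p ∣ z.val := by
  rw [← cast_self_eq hp z, ZMod.isUnit_iff_coprime, ZMod.val_natCast,
      Nat.coprime_pow_right_iff (by omega : 0 < k), Nat.coprime_comm]
  have : z.val % p ^ k = z.val := by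
    haveI : NeZero (p ^ k) := ⟨(pk_pos hp).ne'⟩
    exact Nat.mod_eq_of_lt z.val_lt
  rw [this]
  exact hp.coprime_iff_not_dvd

end Part2

section Cores

variable {p k : ℕ}

lemma taylor_rep (hp : p.Prime) (hk : 2 ≤ k) (P : Polynomial (ZMod (p ^ k)))
    (x : ZMod (p ^ k)) :
    P.eval x = ∑ i ∈ range k, (p : ZMod (p ^ k)) ^ i * mu p k x ^ i *
      (Polynomial.taylor ((x.val % p : ℕ) : ZMod (p ^ k)) P).coeff i := by
  set ρ : ZMod (p ^ k) := ((x.val % p : ℕ) : ZMod (p ^ k)) with hρ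
  set μ : ZMod (p ^ k) := mu p k x with hμ
  set Q := Polynomial.taylor ρ P with hQ
  have h1 : P.eval x = Q.eval ((p : ZMod (p ^ k)) * μ) := by
    rw [hQ, Polynomial.taylor_eval]
    congr 1
    rw [add_comm]
    exact x_decomp hp x
  set N := max k (Q.natDegree + 1) with hN
  have h2 : Q.natDegree < N := lt_of_lt_of_le (Nat.lt_succ_self _) (le_max_right _ _)
  rw [h1, Polynomial.eval_eq_sum_range' h2]
  have hsplit : (range N) = range k ∪ Finset.Ico k N := by
    rw [Finset.range_eq_Ico, Finset.range_eq_Ico]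
    exact (Finset.Ico_union_Ico_eq_Ico (Nat.zero_le _) (le_max_left _ _)).symm
  rw [hsplit, Finset.sum_union (by
    rw [Finset.range_eq_Ico]
    exact Finset.Ico_disjoint_Ico_consecutive 0 k N)]
  have hz : ∀ i ∈ Finset.Ico k N, Q.coeff i * ((p : ZMod (p ^ k)) * μ) ^ i = 0 := by
    intro i hi
    rw [Finset.mem_Ico] at hi
    have : ((p : ZMod (p ^ k)) * μ) ^ i = 0 := by
      rw [show i = k + (i - k) from by omega, pow_add, mul_pow,
        p_pow_k_cast hp]
      ring
    rw [this, mul_zero]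
  rw [Finset.sum_eq_zero hz, add_zero]
  apply Finset.sum_congr rfl
  intro i _
  rw [mul_pow]
  ring

lemma vand_zero (hp : p.Prime) (hk : 2 ≤ k) (hpk : k ≤ p) (w : Fin k → ZMod (p ^ k))
    (h : ∀ m : Fin k, ∑ i : Fin k, ((m.val : ℕ) : ZMod (p ^ k)) ^ (i.val) * w i = 0) :
    ∀ i, w i = 0 := by
  set M : Matrix (Fin k) (Fin k) (ZMod (p ^ k)) :=
    Matrix.of fun m i : Fin k => ((m.val : ℕ) : ZMod (p ^ k)) ^ (i.val) with hM
  have hMv : M.mulVec w = 0 := by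
    funext m
    rw [Matrix.mulVec, dotProduct]
    exact h m
  have hdet : IsUnit M.det := by
    rw [hM, show (Matrix.of fun m i : Fin k => ((m.val : ℕ) : ZMod (p ^ k)) ^ (i.val)) =
      Matrix.vandermonde (fun m : Fin k => ((m.val : ℕ) : ZMod (p ^ k))) from rfl,
      Matrix.det_vandermonde]
    apply Finset.prod_induction _ IsUnit (fun a b ha hb => ha.mul hb) isUnit_one
    intro i _
    apply Finset.prod_induction _ IsUnit (fun a b ha hb => ha.mul hb) isUnit_one
    intro j hj
    rw [Finset.mem_Ioi] at hj
    have hij : i.val < j.val := hj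
    have hfac : ((j.val : ℕ) : ZMod (p ^ k)) - ((i.val : ℕ) : ZMod (p ^ k)) =
        ((j.val - i.val : ℕ) : ZMod (p ^ k)) := by
      push_cast [Nat.cast_sub (le_of_lt hij)]
      ring
    rw [hfac, isUnit_iff_not_dvd hp hk]
    intro hd
    have hjk : j.val < k := j.isLt
    have hlt : j.val - i.val < p ^ k :=
      lt_of_lt_of_le (by omega : j.val - i.val < p) (Nat.le_self_pow (by omega) p)
    rw [ZMod.val_natCast, Nat.mod_eq_of_lt hlt] at hd
    have := Nat.le_of_dvd (by omega) hd
    omega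
  have hone := Matrix.nonsing_inv_mul M hdet
  have : w = 0 := by
    calc w = (1 : Matrix (Fin k) (Fin k) (ZMod (p ^ k))).mulVec w := (Matrix.one_mulVec w).symm
    _ = (M⁻¹ * M).mulVec w := by rw [hone]
    _ = M⁻¹.mulVec (M.mulVec w) := (Matrix.mulVec_mulVec w M⁻¹ M).symm
    _ = M⁻¹.mulVec 0 := by rw [hMv]
    _ = 0 := Matrix.mulVec_zero _
  intro i; rw [this]; rfl

end Cores


section Construct

variable {p k : ℕ}

lemma pr_sub (hp : p.Prime) (hk : 2 ≤ k) (x y : ZMod (p ^ k)) :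
    pr p k (x - y) = pr p k x - pr p k y := by
  haveI : NeZero (p ^ k) := ⟨(pk_pos hp).ne'⟩
  have hφ : ∀ z : ZMod (p ^ k),
      pr p k z = ZMod.castHom (dvd_pow_self p (by omega : k ≠ 0)) (ZMod p) z := by
    intro z
    rw [pr, ZMod.natCast_val, ZMod.castHom_apply]
  rw [hφ, hφ, hφ, map_sub]

lemma isUnit_iff_pr (hp : p.Prime) (hk : 2 ≤ k) (z : ZMod (p ^ k)) :
    IsUnit z ↔ pr p k z ≠ 0 := by
  rw [isUnit_iff_not_dvd hp hk, Ne, pr_eq_zero_iff]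

lemma pr_self_cast (hp : p.Prime) (hk : 2 ≤ k) (x : ZMod (p ^ k)) :
    pr p k x = ((x.val % p : ℕ) : ZMod p) := by
  rw [pr, ZMod.natCast_eq_natCast_iff']
  exact (Nat.mod_mod_of_dvd x.val dvd_rfl).symm

lemma construct (hp : p.Prime) (hk : 2 ≤ k) (B : ℕ → ℕ → ZMod (p ^ k)) :
    ∃ P : Polynomial (ZMod (p ^ k)), ∀ x : ZMod (p ^ k),
      P.eval x = ∑ i ∈ range k, (p : ZMod (p ^ k)) ^ i * mu p k x ^ i * B (x.val % p) i := by
  haveI : NeZero (p ^ k) := ⟨(pk_pos hp).ne'⟩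
  set N := k * Fintype.card (ZMod (p ^ k))ˣ with hN
  have hNk : k ≤ N := Nat.le_mul_of_pos_right k Fintype.card_pos
  set E : ℕ → Polynomial (ZMod (p ^ k)) := fun r =>
    (∏ j ∈ (range p).erase r, (Polynomial.X - Polynomial.C ((j : ℕ) : ZMod (p ^ k)))) ^ N
    with hE
  set Q : ℕ → Polynomial (ZMod (p ^ k)) := fun r =>
    ∑ i ∈ range k, Polynomial.C (B r i) * (Polynomial.X - Polynomial.C ((r : ℕ) : ZMod (p ^ k))) ^ i
    with hQ
  refine ⟨∑ r ∈ range p, E r * Q r, ?_⟩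
  intro x
  set r0 := x.val % p with hr0
  have hr0p : r0 ∈ range p := by
    rw [Finset.mem_range]
    exact Nat.mod_lt _ hp.pos
  -- evaluation of the product inside E r
  have hgeval : ∀ r, (∏ j ∈ (range p).erase r,
      (Polynomial.X - Polynomial.C ((j : ℕ) : ZMod (p ^ k)))).eval x =
      ∏ j ∈ (range p).erase r, (x - ((j : ℕ) : ZMod (p ^ k))) := by
    intro r
    rw [Polynomial.eval_prod]
    apply Finset.prod_congr rfl
    intro j _
    rw [Polynomial.eval_sub, Polynomial.eval_X, Polynomial.eval_C]
  -- E r evaluates to 1 at x when r = r0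
  have hE1 : (E r0).eval x = 1 := by
    rw [hE, Polynomial.eval_pow, hgeval]
    have hunit : IsUnit (∏ j ∈ (range p).erase r0, (x - ((j : ℕ) : ZMod (p ^ k)))) := by
      apply Finset.prod_induction _ IsUnit (fun a b ha hb => ha.mul hb) isUnit_one
      intro j hj
      rw [Finset.mem_erase, Finset.mem_range] at hj
      rw [isUnit_iff_pr hp hk, pr_sub hp hk, pr_self_cast hp hk, pr_natCast hp hk]
      intro hzero
      have : ((r0 : ℕ) : ZMod p) = ((j : ℕ) : ZMod p) := by
        have := sub_eq_zero.mp hzero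
        exact this
      rw [ZMod.natCast_eq_natCast_iff', Nat.mod_eq_of_lt (Nat.mod_lt _ hp.pos),
        Nat.mod_eq_of_lt hj.2] at this
      exact hj.1 this.symm
    obtain ⟨w, hw⟩ := hunit
    rw [← hw, ← Units.val_pow_eq_pow_val, hN, mul_comm k, pow_mul, pow_card_eq_one,
      one_pow, Units.val_one]
  -- E r evaluates to 0 at x when r ≠ r0 (and r < p)
  have hE0 : ∀ r ∈ range p, r ≠ r0 → (E r).eval x = 0 := by
    intro r hr hne
    rw [hE, Polynomial.eval_pow, hgeval]
    have hr0mem : r0 ∈ (range p).erase r := by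
      rw [Finset.mem_erase]
      exact ⟨fun h => hne h.symm, hr0p⟩
    rw [← Finset.mul_prod_erase _ _ hr0mem]
    have hx : x - ((r0 : ℕ) : ZMod (p ^ k)) = p * mu p k x := by
      linear_combination x_decomp hp x
    rw [hx, mul_pow, mul_pow, show N = k + (N - k) from by omega, pow_add,
      p_pow_k_cast hp]
    ring
  -- value of Q r0
  have hQval : (Q r0).eval x = ∑ i ∈ range k,
      (p : ZMod (p ^ k)) ^ i * mu p k x ^ i * B r0 i := by
    rw [hQ]
    rw [Polynomial.eval_finset_sum]
    apply Finset.sum_congr rfl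
    intro i _
    rw [Polynomial.eval_mul, Polynomial.eval_C, Polynomial.eval_pow, Polynomial.eval_sub,
      Polynomial.eval_X, Polynomial.eval_C]
    have hx : x - ((r0 : ℕ) : ZMod (p ^ k)) = p * mu p k x := by
      linear_combination x_decomp hp x
    rw [hx, mul_pow]
    ring
  rw [Polynomial.eval_finset_sum]
  rw [Finset.sum_eq_single r0 (fun r hr hne => by
    rw [Polynomial.eval_mul, hE0 r hr hne, zero_mul]) (fun h => absurd hr0p h)]
  rw [Polynomial.eval_mul, hE1, one_mul, hQval]

end Construct


section PhiInj

variable {p k : ℕ}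

lemma pk1_le (hp : p.Prime) (hk : 2 ≤ k) : p ≤ p ^ (k - 1) :=
  Nat.le_self_pow (by omega) p

lemma special_val (hp : p.Prime) (hk : 2 ≤ k) (r : Fin p) {m : ℕ} (hm : m < p ^ (k - 1)) :
    (((r.val + p * m : ℕ) : ZMod (p ^ k))).val = r.val + p * m := by
  apply ZMod.val_cast_of_lt
  calc r.val + p * m < p + p * m := by omega
    _ = p * (m + 1) := by ring
    _ ≤ p * p ^ (k - 1) := Nat.mul_le_mul_left p (by omega)
    _ = p ^ k := by rw [← pow_succ']; congr 1; omega

lemma special_rfin (hp : p.Prime) (hk : 2 ≤ k) (r : Fin p) {m : ℕ} (hm : m < p ^ (k - 1)) :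
    rfin p k hp.pos (((r.val + p * m : ℕ) : ZMod (p ^ k))) = r := by
  apply Fin.ext
  show (((r.val + p * m : ℕ) : ZMod (p ^ k))).val % p = r.val
  rw [special_val hp hk r hm, Nat.add_mul_mod_self_left, Nat.mod_eq_of_lt r.isLt]

lemma special_mu (hp : p.Prime) (hk : 2 ≤ k) (r : Fin p) {m : ℕ} (hm : m < p ^ (k - 1)) :
    mu p k (((r.val + p * m : ℕ) : ZMod (p ^ k))) = ((m : ℕ) : ZMod (p ^ k)) := by
  rw [mu, special_val hp hk r hm, Nat.add_mul_div_left _ _ hp.pos,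
    Nat.div_eq_of_lt r.isLt, zero_add]

lemma Bd_zero (d : Data p k) (r : Fin p) : Bd p k d r 0 = d.1.1 r := by
  simp [Bd]

lemma Bd_one (hk : 2 ≤ k) (d : Data p k) (r : Fin p) :
    Bd p k d r 1 = (((d.2.1 r : ZMod (p ^ (k - 1))).val : ℕ) : ZMod (p ^ k)) := by
  simp [Bd]

lemma Bd_two (d : Data p k) (r : Fin p) {j : ℕ} (hj : j < k - 2) :
    Bd p k d r (j + 2) = (((d.2.2 r ⟨j, hj⟩).val : ℕ) : ZMod (p ^ k)) := by
  simp only [Bd, show j + 2 ≠ 0 from by omega, if_false, show j + 2 ≠ 1 from by omega,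
    Nat.add_sub_cancel, dif_pos hj]
  rfl

lemma Phi_inj (hp : p.Prime) (hk : 2 ≤ k) (hpk : k ≤ p) :
    Function.Injective (Phi p k hp.pos) := by
  haveI : NeZero (p ^ (k - 1)) := ⟨(pow_pos hp.pos _).ne'⟩
  haveI : NeZero (p ^ k) := ⟨(pk_pos hp).ne'⟩
  intro d d' h
  have key : ∀ r : Fin p, ∀ i : Fin k,
      (p : ZMod (p ^ k)) ^ (i : ℕ) * Bd p k d r i = (p : ZMod (p ^ k)) ^ (i : ℕ) * Bd p k d' r i := by
    intro r
    have hw := vand_zero hp hk hpk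
      (fun i : Fin k => (p : ZMod (p ^ k)) ^ (i : ℕ) * (Bd p k d r i - Bd p k d' r i)) ?_
    · intro i
      linear_combination hw i
    · intro m
      have hm : (m : ℕ) < p ^ (k - 1) :=
        lt_of_lt_of_le (lt_of_lt_of_le m.isLt (le_trans hpk (pk1_le hp hk))) le_rfl
      set x : ZMod (p ^ k) := ((r.val + p * (m : ℕ) : ℕ) : ZMod (p ^ k)) with hx
      have hPhi := congrFun h x
      rw [Phi, Phi, special_rfin hp hk r hm, special_mu hp hk r hm] at hPhi
      rw [← Fin.sum_univ_eq_sum_range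
        (fun i => (p : ZMod (p^k)) ^ i * ((m:ℕ) : ZMod (p^k)) ^ i * Bd p k d r i) k,
        ← Fin.sum_univ_eq_sum_range
        (fun i => (p : ZMod (p^k)) ^ i * ((m:ℕ) : ZMod (p^k)) ^ i * Bd p k d' r i) k] at hPhi
      calc ∑ i : Fin k, (((m : ℕ) : ZMod (p ^ k))) ^ (i : ℕ) *
            ((p : ZMod (p ^ k)) ^ (i : ℕ) * (Bd p k d r i - Bd p k d' r i))
          = (∑ i : Fin k, (p : ZMod (p^k)) ^ (i : ℕ) * ((m:ℕ) : ZMod (p^k)) ^ (i : ℕ) * Bd p k d r i)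
            - ∑ i : Fin k, (p : ZMod (p^k)) ^ (i : ℕ) * ((m:ℕ) : ZMod (p^k)) ^ (i : ℕ) * Bd p k d' r i := by
            rw [← Finset.sum_sub_distrib]
            apply Finset.sum_congr rfl
            intro i _
            ring
        _ = 0 := by rw [hPhi, sub_self]
  -- now extract the three components
  obtain ⟨⟨c, hc⟩, u, a⟩ := d
  obtain ⟨⟨c', hc'⟩, u', a'⟩ := d'
  have h0 : c = c' := by
    funext r
    have := key r ⟨0, by omega⟩
    simpa [Bd_zero] using this
  have h1 : u = u' := by
    funext r
    have := key r ⟨1, by omega⟩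
    simp only [Bd_one hk] at this
    have hv := cancel hp (by omega : 1 ≤ k) (ZMod.val_lt _) (ZMod.val_lt _) (by simpa using this)
    exact Units.ext (ZMod.val_injective _ hv)
  have h2 : a = a' := by
    funext r j
    haveI : NeZero (p ^ (k - 2 - (j : ℕ))) := ⟨(pow_pos hp.pos _).ne'⟩
    have := key r ⟨(j : ℕ) + 2, by omega⟩
    simp only [Bd_two _ _ j.isLt] at this
    have hval : ∀ z : ZMod (p ^ (k - 2 - (j : ℕ))), z.val < p ^ (k - ((j : ℕ) + 2)) := by
      intro z
      have := z.val_lt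
      convert this using 2
      omega
    have hv := cancel hp (by omega : (j : ℕ) + 2 ≤ k) (hval _) (hval _) (by simpa using this)
    have := ZMod.val_injective _ hv
    convert this using 2 <;> simp [Fin.eta]
  subst h0 h1 h2
  rfl

end PhiInj


section PhiBij

variable {p k : ℕ}

lemma pr_Phi (hp : p.Prime) (hk : 2 ≤ k) (d : Data p k) (x : ZMod (p ^ k)) :
    pr p k (Phi p k hp.pos d x) = pr p k (d.1.1 (rfin p k hp.pos x)) := by
  haveI : NeZero (p ^ k) := ⟨(pk_pos hp).ne'⟩
  set φ := ZMod.castHom (dvd_pow_self p (by omega : k ≠ 0)) (ZMod p) with hφdef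
  have hφ : ∀ z : ZMod (p ^ k), pr p k z = φ z := by
    intro z
    rw [pr, ZMod.natCast_val, hφdef, ZMod.castHom_apply]
  rw [hφ, hφ, Phi, map_sum]
  rw [Finset.sum_eq_single_of_mem 0 (Finset.mem_range.mpr (by omega))]
  · simp [Bd_zero]
  · intro i _ hi
    rw [map_mul, map_mul, map_pow, map_natCast, ZMod.natCast_self, zero_pow hi, zero_mul,
      zero_mul]

lemma ub_isUnit (hp : p.Prime) (hk : 2 ≤ k) (d : Data p k) (r : Fin p) :
    IsUnit (Bd p k d r 1) := by
  haveI : NeZero (p ^ (k - 1)) := ⟨(pow_pos hp.pos _).ne'⟩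
  haveI : NeZero (p ^ k) := ⟨(pk_pos hp).ne'⟩
  rw [Bd_one hk, isUnit_iff_not_dvd hp hk]
  set v := ((d.2.1 r : ZMod (p ^ (k - 1))).val) with hv
  have hvlt : v < p ^ k :=
    lt_of_lt_of_le (ZMod.val_lt _) (Nat.pow_le_pow_right hp.pos (by omega))
  rw [ZMod.val_cast_of_lt hvlt]
  intro hdvd
  have hu : IsUnit ((v : ℕ) : ZMod (p ^ (k - 1))) := by
    rw [hv, ZMod.natCast_rightInverse]
    exact (d.2.1 r).isUnit
  rw [ZMod.isUnit_iff_coprime] at hu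
  have hp1 : p ∣ p ^ (k - 1) := dvd_pow_self p (by omega)
  have := Nat.Coprime.coprime_dvd_right hp1 hu
  rcases hdvd with ⟨c, hc⟩
  have h1 := Nat.Coprime.eq_one_of_dvd this.symm ⟨c, hc⟩
  exact hp.one_lt.ne' h1

lemma Phi_bijective (hp : p.Prime) (hk : 2 ≤ k) (d : Data p k) :
    Function.Bijective (Phi p k hp.pos d) := by
  haveI : NeZero (p ^ k) := ⟨(pk_pos hp).ne'⟩
  rw [← Finite.injective_iff_bijective]
  intro x y hxy
  -- same residue
  have hrr : rfin p k hp.pos x = rfin p k hp.pos y := by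
    apply d.1.2
    have h1 := pr_Phi hp hk d x
    have h2 := pr_Phi hp hk d y
    rw [hxy] at h1
    exact (h1.symm.trans h2)
  have hρ : x.val % p = y.val % p := congrArg Fin.val hrr
  set r := rfin p k hp.pos x with hrdef
  set μx := mu p k x with hμx
  set μy := mu p k y with hμy
  set D := μx - μy with hD
  set t : ℕ → ZMod (p ^ k) := fun i => (sub_dvd_pow_sub_pow μx μy i).choose with ht
  have hts : ∀ i, μx ^ i - μy ^ i = D * t i := fun i =>
    (sub_dvd_pow_sub_pow μx μy i).choose_spec
  set ub := Bd p k d r 1 with hub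
  set Z : ZMod (p ^ k) :=
    ∑ i ∈ Finset.Ico 2 k, (p : ZMod (p ^ k)) ^ (i - 2) * t i * Bd p k d r i with hZ
  have e1 : Phi p k hp.pos d x =
      ∑ i ∈ range k, (p : ZMod (p ^ k)) ^ i * μx ^ i * Bd p k d r i := rfl
  have e2 : Phi p k hp.pos d y =
      ∑ i ∈ range k, (p : ZMod (p ^ k)) ^ i * μy ^ i * Bd p k d (rfin p k hp.pos y) i := rfl
  rw [← hrr] at e2
  have hsum : (0 : ZMod (p ^ k)) =
      ∑ i ∈ range k, (p : ZMod (p ^ k)) ^ i * (μx ^ i - μy ^ i) * Bd p k d r i := by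
    calc (0 : ZMod (p ^ k)) = Phi p k hp.pos d x - Phi p k hp.pos d y := by rw [hxy, sub_self]
    _ = (∑ i ∈ range k, (p : ZMod (p ^ k)) ^ i * μx ^ i * Bd p k d r i)
        - ∑ i ∈ range k, (p : ZMod (p ^ k)) ^ i * μy ^ i * Bd p k d r i := by rw [e1, e2]
    _ = ∑ i ∈ range k, (p : ZMod (p ^ k)) ^ i * (μx ^ i - μy ^ i) * Bd p k d r i := by
        rw [← Finset.sum_sub_distrib]
        exact Finset.sum_congr rfl (fun i _ => by ring)
  have hsplit : ∑ i ∈ range k, (p : ZMod (p ^ k)) ^ i * (μx ^ i - μy ^ i) * Bd p k d r i =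
      (p : ZMod (p ^ k)) * D * (ub + (p : ZMod (p ^ k)) * Z) := by
    have h2k : 2 ≤ k := hk
    rw [show range k = Finset.Ico 0 2 ∪ Finset.Ico 2 k from by
      rw [Finset.range_eq_Ico]
      exact (Finset.Ico_union_Ico_eq_Ico (by omega) (by omega)).symm,
      Finset.sum_union (Finset.Ico_disjoint_Ico_consecutive 0 2 k)]
    have h01 : ∑ i ∈ Finset.Ico 0 2, (p : ZMod (p ^ k)) ^ i * (μx ^ i - μy ^ i) * Bd p k d r i
        = (p : ZMod (p ^ k)) * D * ub := by
      rw [show Finset.Ico 0 2 = {0, 1} from rfl]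
      rw [Finset.sum_insert (by decide), Finset.sum_singleton]
      simp only [pow_zero, pow_one, sub_self]
      rw [← hub]
      ring
    rw [h01, hZ, Finset.mul_sum]
    have h2 : ∑ i ∈ Finset.Ico 2 k, (p : ZMod (p ^ k)) ^ i * (μx ^ i - μy ^ i) * Bd p k d r i =
        ∑ i ∈ Finset.Ico 2 k, (p : ZMod (p ^ k)) * D *
          ((p : ZMod (p ^ k)) * ((p : ZMod (p ^ k)) ^ (i - 2) * t i * Bd p k d r i)) := by
      apply Finset.sum_congr rfl
      intro i hi
      rw [Finset.mem_Ico] at hi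
      have hpow : (p : ZMod (p ^ k)) ^ i = p * p * p ^ (i - 2) := by
        conv_lhs => rw [show i = 1 + 1 + (i - 2) from by omega]
        rw [pow_add, pow_add, pow_one]
      rw [hts i, hpow]
      ring
    rw [h2, ← Finset.mul_sum]
    ring
  have hunit : IsUnit (ub + (p : ZMod (p ^ k)) * Z) := by
    apply IsNilpotent.isUnit_add_left_of_commute
    · exact ⟨k, by rw [mul_pow, p_pow_k_cast hp, zero_mul]⟩
    · exact ub_isUnit hp hk d r
    · exact mul_comm _ _
  have hPD : (p : ZMod (p ^ k)) * D = 0 := by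
    have h0 : (p : ZMod (p ^ k)) * D * (ub + (p : ZMod (p ^ k)) * Z) = 0 := by
      rw [← hsplit, ← hsum]
    exact (IsUnit.mul_left_eq_zero hunit).mp h0
  have hc : ((x.val % p : ℕ) : ZMod (p ^ k)) = ((y.val % p : ℕ) : ZMod (p ^ k)) := by rw [hρ]
  linear_combination (x_decomp hp x) - (x_decomp hp y) + hc + hPD

end PhiBij


section PhiSurj

variable {p k : ℕ}

lemma pr_sumB (hp : p.Prime) (hk : 2 ≤ k) (B : ℕ → ZMod (p ^ k)) (μ : ZMod (p ^ k)) :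
    pr p k (∑ i ∈ range k, (p : ZMod (p ^ k)) ^ i * μ ^ i * B i) = pr p k (B 0) := by
  haveI : NeZero (p ^ k) := ⟨(pk_pos hp).ne'⟩
  set φ := ZMod.castHom (dvd_pow_self p (by omega : k ≠ 0)) (ZMod p) with hφdef
  have hφ : ∀ z : ZMod (p ^ k), pr p k z = φ z := by
    intro z
    rw [pr, ZMod.natCast_val, hφdef, ZMod.castHom_apply]
  rw [hφ, hφ, map_sum]
  rw [Finset.sum_eq_single_of_mem 0 (Finset.mem_range.mpr (by omega))]
  · simp
  · intro i _ hi
    rw [map_mul, map_mul, map_pow, map_natCast, ZMod.natCast_self, zero_pow hi, zero_mul,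
      zero_mul]

lemma Phi_poly (hp : p.Prime) (hk : 2 ≤ k) (d : Data p k) :
    ∃ P : Polynomial (ZMod (p ^ k)), ∀ x, Phi p k hp.pos d x = P.eval x := by
  obtain ⟨P, hP⟩ := construct hp hk (fun r i => if h : r < p then Bd p k d ⟨r, h⟩ i else 0)
  refine ⟨P, fun x => ?_⟩
  rw [hP x, Phi]
  apply Finset.sum_congr rfl
  intro i _
  rw [dif_pos (Nat.mod_lt _ hp.pos)]
  rfl

lemma Phi_surj (hp : p.Prime) (hk : 2 ≤ k) (hpk : k ≤ p) (f : ZMod (p ^ k) → ZMod (p ^ k))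
    (hpoly : ∃ P : Polynomial (ZMod (p ^ k)), ∀ x, f x = P.eval x)
    (hbij : Function.Bijective f) : ∃ d : Data p k, Phi p k hp.pos d = f := by
  haveI : NeZero (p ^ k) := ⟨(pk_pos hp).ne'⟩
  haveI : NeZero (p ^ (k - 1)) := ⟨(pow_pos hp.pos _).ne'⟩
  haveI : NeZero (p ^ (k - 2)) := ⟨(pow_pos hp.pos _).ne'⟩
  haveI : NeZero p := ⟨hp.ne_zero⟩
  obtain ⟨P, hP⟩ := hpoly
  set b : Fin p → ℕ → ZMod (p ^ k) :=
    fun r i => (Polynomial.taylor ((r.val : ℕ) : ZMod (p ^ k)) P).coeff i with hb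
  have hrep : ∀ x, f x = ∑ i ∈ range k,
      (p : ZMod (p ^ k)) ^ i * mu p k x ^ i * b (rfin p k hp.pos x) i := by
    intro x
    rw [hP x]
    exact taylor_rep hp hk P x
  -- injectivity of the residues of the constant terms
  have hcinj : Function.Injective (fun r : Fin p => pr p k (b r 0)) := by
    have hsurj : Function.Surjective (fun r : Fin p => pr p k (b r 0)) := by
      intro s
      obtain ⟨x, hx⟩ := hbij.2 ((s.val : ℕ) : ZMod (p ^ k))
      refine ⟨rfin p k hp.pos x, ?_⟩
      have h1 : pr p k (f x) = pr p k (b (rfin p k hp.pos x) 0) := by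
        rw [hrep x]
        exact pr_sumB hp hk _ _
      rw [hx, pr_natCast hp hk, ZMod.natCast_rightInverse] at h1
      exact h1.symm
    have hcard : Fintype.card (ZMod p) = Fintype.card (Fin p) := by
      rw [Fintype.card_fin, ZMod.card]
    set e : ZMod p ≃ Fin p := Fintype.equivOfCardEq hcard with he
    have hsurj' : Function.Surjective (fun r : Fin p => e (pr p k (b r 0))) :=
      e.surjective.comp hsurj
    have hinj' := Finite.injective_iff_surjective.mpr hsurj'
    intro r r' hrr
    exact hinj' (congrArg e hrr)
  -- unit condition on the linear coefficients
  have hunit : ∀ r : Fin p, ¬ (p ∣ (b r 1).val) := by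
    intro r hdvd
    set z := (((b r 1).val / p : ℕ) : ZMod (p ^ k)) with hz
    have hbz : b r 1 = (p : ZMod (p ^ k)) * z := by
      conv_lhs => rw [← cast_self_eq hp (b r 1),
        show (b r 1).val = p * ((b r 1).val / p) from (Nat.mul_div_cancel' hdvd).symm]
      push_cast
      rfl
    set W : Fin (p ^ (k - 1)) → ZMod (p ^ k) := fun m =>
      ((m.val : ℕ) : ZMod (p ^ k)) * z + ∑ i ∈ Finset.Ico 2 k,
        (p : ZMod (p ^ k)) ^ (i - 2) * ((m.val : ℕ) : ZMod (p ^ k)) ^ i * b r i with hW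
    have hfval : ∀ m : Fin (p ^ (k - 1)),
        f (((r.val + p * m.val : ℕ) : ZMod (p ^ k))) = b r 0 +
          (p : ZMod (p ^ k)) ^ 2 * W m := by
      intro m
      rw [hrep, special_rfin hp hk r m.isLt, special_mu hp hk r m.isLt]
      rw [show range k = Finset.Ico 0 2 ∪ Finset.Ico 2 k from by
        rw [Finset.range_eq_Ico]
        exact (Finset.Ico_union_Ico_eq_Ico (by omega) (by omega)).symm,
        Finset.sum_union (Finset.Ico_disjoint_Ico_consecutive 0 2 k)]
      rw [show Finset.Ico 0 2 = {0, 1} from rfl, Finset.sum_insert (by decide),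
        Finset.sum_singleton]
      have h2 : ∑ i ∈ Finset.Ico 2 k,
          (p : ZMod (p ^ k)) ^ i * ((m.val : ℕ) : ZMod (p ^ k)) ^ i * b r i =
          (p : ZMod (p ^ k)) ^ 2 * ∑ i ∈ Finset.Ico 2 k,
            (p : ZMod (p ^ k)) ^ (i - 2) * ((m.val : ℕ) : ZMod (p ^ k)) ^ i * b r i := by
        rw [Finset.mul_sum]
        apply Finset.sum_congr rfl
        intro i hi
        rw [Finset.mem_Ico] at hi
        have hpow : (p : ZMod (p ^ k)) ^ i = p ^ 2 * p ^ (i - 2) := by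
          conv_lhs => rw [show i = 2 + (i - 2) from by omega]
          rw [pow_add]
        rw [hpow]
        ring
      have hWm : W m = ((m.val : ℕ) : ZMod (p ^ k)) * z + ∑ i ∈ Finset.Ico 2 k,
          (p : ZMod (p ^ k)) ^ (i - 2) * ((m.val : ℕ) : ZMod (p ^ k)) ^ i * b r i := rfl
      rw [hbz, h2, hWm]
      ring
    set σ : Fin (p ^ (k - 1)) → Fin (p ^ (k - 2)) := fun m =>
      ⟨(W m).val % p ^ (k - 2), Nat.mod_lt _ (pow_pos hp.pos _)⟩ with hσ
    have hσinj : Function.Injective σ := by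
      intro m m' hmm
      have hW2 : (p : ZMod (p ^ k)) ^ 2 * W m = (p : ZMod (p ^ k)) ^ 2 * W m' := by
        have e1 := mod_absorb hp (by omega : 2 ≤ k) (W m)
        have e2 := mod_absorb hp (by omega : 2 ≤ k) (W m')
        have : (W m).val % p ^ (k - 2) = (W m').val % p ^ (k - 2) := congrArg Fin.val hmm
        rw [← e1, ← e2, this]
      have hfe : f (((r.val + p * m.val : ℕ) : ZMod (p ^ k))) =
          f (((r.val + p * m'.val : ℕ) : ZMod (p ^ k))) := by
        rw [hfval, hfval, hW2]
      have := hbij.1 hfe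
      have hval := congrArg ZMod.val this
      rw [special_val hp hk r m.isLt, special_val hp hk r m'.isLt] at hval
      have hpm : p * m.val = p * m'.val := by omega
      exact Fin.ext (Nat.eq_of_mul_eq_mul_left hp.pos hpm)
    have hcard := Fintype.card_le_of_injective σ hσinj
    rw [Fintype.card_fin, Fintype.card_fin] at hcard
    have : p ^ (k - 2) < p ^ (k - 1) := Nat.pow_lt_pow_right hp.one_lt (by omega)
    omega
  -- assemble the data
  have hucop : ∀ r : Fin p, IsUnit (((b r 1).val : ℕ) : ZMod (p ^ (k - 1))) := by
    intro r
    rw [ZMod.isUnit_iff_coprime]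
    apply Nat.Coprime.pow_right
    exact (hp.coprime_iff_not_dvd.mpr (hunit r)).symm
  refine ⟨⟨⟨fun r => b r 0, hcinj⟩, fun r => (hucop r).unit,
    fun r j => (((b r (j.val + 2)).val : ℕ) : ZMod (p ^ (k - 2 - j.val)))⟩, ?_⟩
  funext x
  rw [hrep x, Phi]
  apply Finset.sum_congr rfl
  intro i hi
  rw [Finset.mem_range] at hi
  set r := rfin p k hp.pos x with hr
  match i, hi with
  | 0, _ => rfl
  | 1, _ =>
    have hBd1 : Bd p k ⟨⟨fun r => b r 0, hcinj⟩, fun r => (hucop r).unit,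
        fun r j => (((b r (j.val + 2)).val : ℕ) : ZMod (p ^ (k - 2 - j.val)))⟩ r 1 =
        (((b r 1).val % p ^ (k - 1) : ℕ) : ZMod (p ^ k)) := by
      rw [Bd_one hk]
      congr 1
      rw [IsUnit.unit_spec, ZMod.val_natCast]
    rw [hBd1]
    have habs := mod_absorb hp (by omega : 1 ≤ k) (b r 1)
    rw [pow_one] at habs
    have : (p : ZMod (p ^ k)) * (((b r 1).val % p ^ (k - 1) : ℕ) : ZMod (p ^ k)) =
        (p : ZMod (p ^ k)) * b r 1 := habs
    rw [pow_one]
    linear_combination mu p k x * this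
  | (j + 2), hj =>
    have hjk : j < k - 2 := by omega
    have hBd2 : Bd p k ⟨⟨fun r => b r 0, hcinj⟩, fun r => (hucop r).unit,
        fun r j => (((b r (j.val + 2)).val : ℕ) : ZMod (p ^ (k - 2 - j.val)))⟩ r (j + 2) =
        (((b r (j + 2)).val % p ^ (k - 2 - j) : ℕ) : ZMod (p ^ k)) := by
      rw [Bd_two _ _ hjk]
      congr 1
      rw [ZMod.val_natCast]
    rw [hBd2]
    have habs := mod_absorb hp (by omega : j + 2 ≤ k) (b r (j + 2))
    rw [show k - (j + 2) = k - 2 - j from by omega] at habs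
    linear_combination mu p k x ^ (j + 2) * habs

end PhiSurj


section Count

variable {p k : ℕ}

lemma div_lt_pk1 (hp : p.Prime) (hk : 2 ≤ k) (x : ZMod (p ^ k)) :
    x.val / p < p ^ (k - 1) := by
  haveI : NeZero (p ^ k) := ⟨(pk_pos hp).ne'⟩
  rw [Nat.div_lt_iff_lt_mul hp.pos]
  calc x.val < p ^ k := x.val_lt
    _ = p ^ (k - 1) * p := by rw [← pow_succ]; congr 1; omega

lemma sum_lt_pk (hp : p.Prime) (hk : 2 ≤ k) {a m : ℕ} (ha : a < p) (hm : m < p ^ (k - 1)) :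
    a + p * m < p ^ k := by
  calc a + p * m < p + p * m := by omega
    _ = p * (m + 1) := by ring
    _ ≤ p * p ^ (k - 1) := Nat.mul_le_mul_left p (by omega)
    _ = p ^ k := by rw [← pow_succ']; congr 1; omega

/-- the equivalence computing the cardinality of the `c`-component -/
def eC (hp : p.Prime) (hk : 2 ≤ k) :
    {c : Fin p → ZMod (p ^ k) // Function.Injective fun r => pr p k (c r)} ≃
      (Fin p ↪ ZMod p) × (Fin p → ZMod (p ^ (k - 1))) where
  toFun c := (⟨fun r => pr p k (c.1 r), c.2⟩,
    fun r => (((c.1 r).val / p : ℕ) : ZMod (p ^ (k - 1))))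
  invFun em := ⟨fun r => (((em.1 r).val + p * (em.2 r).val : ℕ) : ZMod (p ^ k)), by
    haveI : NeZero p := ⟨hp.ne_zero⟩
    haveI : NeZero (p ^ (k - 1)) := ⟨(pow_pos hp.pos _).ne'⟩
    have key : ∀ r, pr p k (((em.1 r).val + p * (em.2 r).val : ℕ) : ZMod (p ^ k)) = em.1 r := by
      intro r
      rw [pr_natCast hp hk]
      push_cast
      rw [ZMod.natCast_self, ZMod.natCast_rightInverse]
      ring
    intro r r' h
    apply em.1.injective
    rw [← key r, ← key r']
    exact h⟩
  left_inv := by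
    intro c
    haveI : NeZero p := ⟨hp.ne_zero⟩
    haveI : NeZero (p ^ (k - 1)) := ⟨(pow_pos hp.pos _).ne'⟩
    apply Subtype.ext
    funext r
    show ((((pr p k (c.1 r)).val + p * ((((c.1 r).val / p : ℕ) :
      ZMod (p ^ (k - 1))).val) : ℕ)) : ZMod (p ^ k)) = c.1 r
    rw [pr, ZMod.val_natCast, ZMod.val_natCast,
      Nat.mod_eq_of_lt (div_lt_pk1 hp hk _), Nat.mod_add_div]
    exact cast_self_eq hp _
  right_inv := by
    intro em
    haveI : NeZero p := ⟨hp.ne_zero⟩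
    haveI : NeZero (p ^ (k - 1)) := ⟨(pow_pos hp.pos _).ne'⟩
    have hval : ∀ r, ((((em.1 r).val + p * (em.2 r).val : ℕ) : ZMod (p ^ k))).val =
        (em.1 r).val + p * (em.2 r).val := by
      intro r
      exact ZMod.val_cast_of_lt (sum_lt_pk hp hk (ZMod.val_lt _) (ZMod.val_lt _))
    apply Prod.ext
    · apply Function.Embedding.ext
      intro r
      show pr p k ((((em.1 r).val + p * (em.2 r).val : ℕ)) : ZMod (p ^ k)) = em.1 r
      rw [pr_natCast hp hk]
      push_cast
      rw [ZMod.natCast_self, ZMod.natCast_rightInverse]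
      ring
    · funext r
      show ((((((em.1 r).val + p * (em.2 r).val : ℕ) : ZMod (p ^ k))).val / p : ℕ) :
        ZMod (p ^ (k - 1))) = em.2 r
      rw [hval r, Nat.add_mul_div_left _ _ hp.pos, Nat.div_eq_of_lt (ZMod.val_lt _), zero_add]
      exact ZMod.natCast_rightInverse _

end Count


lemma gauss_sum (n : ℕ) : 2 * (∑ j ∈ range n, (n - j)) = n * (n + 1) := by
  induction n with
  | zero => simp
  | succ m ih =>
    rw [Finset.sum_range_succ' (fun j => m + 1 - j) m]
    have h1 : ∀ j ∈ range m, m + 1 - (j + 1) = m - j := fun j _ => Nat.succ_sub_succ m j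
    rw [Finset.sum_congr rfl h1]
    have h2 : m + 1 - 0 = m + 1 := rfl
    rw [h2, Nat.mul_add, ih]
    ring

end S15

open S15 in
theorem stmt15_aux (p k : ℕ) (hp : p.Prime) (hk : 2 ≤ k) (hpk : k ≤ p) :
    Nat.card (Data p k) =
      p.factorial * ((p - 1) * p ^ ((k ^ 2 + k - 4) / 2)) ^ p := by
  haveI : NeZero p := ⟨hp.ne_zero⟩
  haveI : NeZero (p ^ k) := ⟨(pk_pos hp).ne'⟩
  haveI : NeZero (p ^ (k - 1)) := ⟨(pow_pos hp.pos _).ne'⟩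
  have e0 : Data p k ≃ ((Fin p ↪ ZMod p) × (Fin p → ZMod (p ^ (k - 1)))) ×
      ((Fin p → (ZMod (p ^ (k - 1)))ˣ) ×
        (Fin p → (j : Fin (k - 2)) → ZMod (p ^ (k - 2 - j.val)))) :=
    Equiv.prodCongr (eC hp hk) (Equiv.refl _)
  rw [Nat.card_congr e0, Nat.card_prod, Nat.card_prod, Nat.card_prod]
  set E := ∑ j : Fin (k - 2), (k - 2 - (j : ℕ)) with hEdef
  have c1 : Nat.card (Fin p ↪ ZMod p) = p.factorial := by
    rw [Nat.card_eq_fintype_card, Fintype.card_embedding_eq, ZMod.card, Fintype.card_fin,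
      Nat.descFactorial_self]
  have c2 : Nat.card (Fin p → ZMod (p ^ (k - 1))) = (p ^ (k - 1)) ^ p := by
    rw [Nat.card_fun, Nat.card_zmod, Nat.card_eq_fintype_card, Fintype.card_fin]
  have c3 : Nat.card (Fin p → (ZMod (p ^ (k - 1)))ˣ) = (p ^ (k - 2) * (p - 1)) ^ p := by
    rw [Nat.card_fun, Nat.card_eq_fintype_card, ZMod.card_units_eq_totient,
      Nat.totient_prime_pow hp (by omega : 0 < k - 1),
      show k - 1 - 1 = k - 2 from by omega]
    rw [Nat.card_eq_fintype_card, Fintype.card_fin]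
  have c4 : Nat.card (Fin p → (j : Fin (k - 2)) → ZMod (p ^ (k - 2 - j.val))) =
      (p ^ E) ^ p := by
    haveI : ∀ j : Fin (k - 2), NeZero (p ^ (k - 2 - j.val)) :=
      fun j => ⟨(pow_pos hp.pos _).ne'⟩
    rw [Nat.card_fun, Nat.card_pi]
    have : ∀ j : Fin (k - 2), Nat.card (ZMod (p ^ (k - 2 - j.val))) = p ^ (k - 2 - j.val) :=
      fun j => Nat.card_zmod _
    rw [Finset.prod_congr rfl (fun j _ => this j), Finset.prod_pow_eq_pow_sum, ← hEdef,
      Nat.card_eq_fintype_card, Fintype.card_fin]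
  have hE : 2 * E = (k - 2) * (k - 1) := by
    have hEr : E = ∑ j ∈ range (k - 2), (k - 2 - j) :=
      Fin.sum_univ_eq_sum_range (fun j => k - 2 - j) (k - 2)
    rw [hEr, gauss_sum (k - 2), show k - 2 + 1 = k - 1 from by omega]
  have hexp : (k ^ 2 + k - 4) / 2 = (k - 1) + ((k - 2) + E) := by
    obtain ⟨n, rfl⟩ : ∃ n, k = n + 2 := ⟨k - 2, by omega⟩
    have e2 : 2 * E = n * (n + 1) := hE
    have e2' : 2 * E = n * n + n := by rw [e2]; ring
    show ((n + 2) ^ 2 + (n + 2) - 4) / 2 = (n + 1) + (n + E)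
    rw [show (n + 2) ^ 2 = n * n + 4 * n + 4 from by ring]
    generalize hm : n * n = m at e2' ⊢
    omega
  rw [c1, c2, c3, c4, hexp]
  rw [pow_add, pow_add, mul_pow ((p : ℕ) - 1), mul_pow, mul_pow]
  ring


open S15 in
/-- For `p` prime and `2 ≤ k ≤ p`, the number of permutations of `ℤ/p^k` induced by
polynomials is `p! · [(p-1) · p^((k²+k-4)/2)]^p`. -/
theorem stmt15 (p k : ℕ) (hp : p.Prime) (hk : 2 ≤ k) (hpk : k ≤ p) :
    Nat.card (PolyPerms (ZMod (p ^ k))) =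
      p.factorial * ((p - 1) * p ^ ((k ^ 2 + k - 4) / 2)) ^ p := by
  have ePerm : ↥(PolyPerms (ZMod (p ^ k))) ≃
      {f : ZMod (p ^ k) → ZMod (p ^ k) //
        (∃ P : Polynomial (ZMod (p ^ k)), ∀ x, f x = P.eval x) ∧ Function.Bijective f} :=
    { toFun := fun σ => ⟨⇑σ.1, σ.2, σ.1.bijective⟩
      invFun := fun f => ⟨Equiv.ofBijective f.1 f.2.2, f.2.1⟩
      left_inv := fun σ => Subtype.ext (Equiv.ext fun x => rfl)
      right_inv := fun f => rfl }
  have eData : Data p k ≃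
      {f : ZMod (p ^ k) → ZMod (p ^ k) //
        (∃ P : Polynomial (ZMod (p ^ k)), ∀ x, f x = P.eval x) ∧ Function.Bijective f} :=
    Equiv.ofBijective
      (fun d => ⟨Phi p k hp.pos d, Phi_poly hp hk d, Phi_bijective hp hk d⟩)
      ⟨fun d d' h => Phi_inj hp hk hpk (congrArg Subtype.val h),
       fun f => by
        obtain ⟨d, hd⟩ := Phi_surj hp hk hpk f.1 f.2.1 f.2.2
        exact ⟨d, Subtype.ext hd⟩⟩
  rw [Nat.card_congr (ePerm.trans eData.symm)]
  exact stmt15_aux p k hp hk hpk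
end

section
/- Let p ≥ k and let d₁, …, d_{k−1} be integers with 0 ≤ d_ℓ < p^{k−ℓ}. If Σ_{ℓ=1}^{k−1} (mp)^ℓ d_ℓ ≡ 0 (mod p^k) for every integer m, then d_ℓ = 0 for all ℓ. -/
open Finset Function fwdDiff

private lemma fwdDiff_iter_const' (a : ℤ) (n : ℕ) :
    (fwdDiff (1:ℕ))^[n] (fun _ : ℕ ↦ a) = fun _ ↦ if n = 0 then a else (0:ℤ) := by
  induction n generalizing a with
  | zero => simp
  | succ n ih =>
    rw [Function.iterate_succ_apply]
    have : (fwdDiff (1:ℕ)) (fun _ : ℕ ↦ a) = fun _ : ℕ ↦ (0:ℤ) := by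
      ext x; simp [fwdDiff]
    rw [this, ih 0]
    ext x; simp

private lemma fwdDiff_iter_pow_self (ℓ : ℕ) :
    (fwdDiff (1:ℕ))^[ℓ] (fun x : ℕ ↦ (x:ℤ)^ℓ) = fun _ ↦ (Nat.factorial ℓ : ℤ) := by
  induction ℓ using Nat.strong_induction_on with
  | _ ℓ IH =>
    match ℓ with
    | 0 => ext x; simp
    | (ℓ+1) =>
      rw [Function.iterate_succ_apply]
      have hΔ : (fwdDiff (1:ℕ)) (fun x : ℕ ↦ (x:ℤ)^(ℓ+1))
          = ∑ j ∈ range (ℓ+1), ((ℓ+1).choose j : ℤ) • (fun x : ℕ ↦ (x:ℤ)^j) := by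
        ext x
        simp only [fwdDiff, Finset.sum_apply, Pi.smul_apply, smul_eq_mul]
        push_cast
        rw [add_pow, Finset.sum_range_succ]
        simp only [one_pow, mul_one, Nat.choose_self, Nat.cast_one, Nat.sub_self, pow_zero,
          add_sub_cancel_right]
        exact Finset.sum_congr rfl fun j _ => by ring
      rw [hΔ, fwdDiff_iter_finset_sum]
      have hterm : ∀ j ∈ range (ℓ+1),
          (fwdDiff (1:ℕ))^[ℓ] (((ℓ+1).choose j : ℤ) • (fun x : ℕ ↦ (x:ℤ)^j))
          = ((ℓ+1).choose j : ℤ) • (fwdDiff (1:ℕ))^[ℓ] (fun x : ℕ ↦ (x:ℤ)^j) := by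
        intro j _; exact fwdDiff_iter_const_smul _ _ _ _
      rw [Finset.sum_congr rfl hterm, Finset.sum_range_succ]
      have hlow : ∀ j ∈ range ℓ,
          ((ℓ+1).choose j : ℤ) • (fwdDiff (1:ℕ))^[ℓ] (fun x : ℕ ↦ (x:ℤ)^j)
          = (fun _ : ℕ ↦ (0:ℤ)) := by
        intro j hj
        rw [mem_range] at hj
        have : (fwdDiff (1:ℕ))^[ℓ] (fun x : ℕ ↦ (x:ℤ)^j) = fun _ ↦ (0:ℤ) := by
          have h1 : ℓ = (ℓ - j) + j := (Nat.sub_add_cancel hj.le).symm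
          rw [h1, Function.iterate_add_apply, IH j (Nat.lt_succ_of_lt hj),
            fwdDiff_iter_const']
          ext x; simp [Nat.sub_eq_zero_iff_le, Nat.not_le.mpr hj]
        rw [this]; ext x; simp
      rw [Finset.sum_congr rfl hlow, IH ℓ (Nat.lt_succ_self ℓ)]
      ext x
      simp only [Finset.sum_apply, Pi.add_apply, Pi.smul_apply, smul_eq_mul,
        Finset.sum_const_zero]
      rw [Nat.choose_succ_self_right]
      rw [Nat.factorial_succ]
      push_cast
      ring

private lemma fwdDiff_iter_pow_lt {j n : ℕ} (h : j < n) :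
    (fwdDiff (1:ℕ))^[n] (fun x : ℕ ↦ (x:ℤ)^j) = fun _ ↦ (0:ℤ) := by
  have h1 : n = (n - j) + j := (Nat.sub_add_cancel h.le).symm
  rw [h1, Function.iterate_add_apply, fwdDiff_iter_pow_self, fwdDiff_iter_const']
  ext x; simp [Nat.sub_eq_zero_iff_le, Nat.not_le.mpr h]

/-- Uniqueness lemma: if `0 ≤ d_ℓ < p^(k-ℓ)` and `Σ_{ℓ=1}^{k-1} (mp)^ℓ d_ℓ ≡ 0 (mod p^k)` for
every integer `m`, then all `d_ℓ` vanish (assuming `p ≥ k`, `p` prime). -/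
theorem stmt16 (p k : ℕ) (hp : p.Prime) (hpk : k ≤ p) (d : ℕ → ℕ)
    (hd : ∀ ℓ ∈ Finset.Icc 1 (k - 1), d ℓ < p ^ (k - ℓ))
    (h : ∀ m : ℤ, (p : ℤ) ^ k ∣ ∑ ℓ ∈ Finset.Icc 1 (k - 1), (m * p) ^ ℓ * (d ℓ : ℤ)) :
    ∀ ℓ ∈ Finset.Icc 1 (k - 1), d ℓ = 0 := by
  set c : ℕ → ℤ := fun ℓ ↦ (p:ℤ)^ℓ * (d ℓ : ℤ) with hc
  set f : ℕ → ℤ := ∑ ℓ ∈ Finset.Icc 1 (k-1), c ℓ • (fun x : ℕ ↦ (x:ℤ)^ℓ) with hf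
  have hfval : ∀ x : ℕ, f x = ∑ ℓ ∈ Finset.Icc 1 (k-1), ((x:ℤ) * p) ^ ℓ * (d ℓ : ℤ) := by
    intro x
    rw [hf]
    simp only [Finset.sum_apply, Pi.smul_apply, smul_eq_mul, hc]
    exact Finset.sum_congr rfl fun ℓ _ => by rw [mul_pow]; ring
  have hdvdf : ∀ x : ℕ, (p:ℤ)^k ∣ f x := fun x => (hfval x) ▸ h x
  have hdvdΔ : ∀ n : ℕ, (p:ℤ)^k ∣ (fwdDiff (1:ℕ))^[n] f 0 := by
    intro n
    rw [fwdDiff_iter_eq_sum_shift]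
    refine Finset.dvd_sum fun i _ => ?_
    rw [zsmul_eq_mul]
    exact Dvd.dvd.mul_left (hdvdf _) _
  -- main claim by downward induction
  have key : ∀ t : ℕ, ∀ ℓ ∈ Finset.Icc 1 (k-1), k - 1 - ℓ < t → d ℓ = 0 := by
    intro t
    induction t with
    | zero => intro ℓ _ hlt; omega
    | succ t IH =>
      intro ℓ hℓ hlt
      rw [Finset.mem_Icc] at hℓ
      by_cases hcase : k - 1 - ℓ < t
      · exact IH ℓ (Finset.mem_Icc.mpr hℓ) hcase
      have heq : k - 1 - ℓ = t := by omega
      -- compute the ℓ-th difference of f at 0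
      have hΔf : (fwdDiff (1:ℕ))^[ℓ] f 0 = c ℓ * (Nat.factorial ℓ : ℤ) := by
        rw [hf, fwdDiff_iter_finset_sum]
        have : ∀ j ∈ Finset.Icc 1 (k-1),
            (fwdDiff (1:ℕ))^[ℓ] (c j • (fun x : ℕ ↦ (x:ℤ)^j))
            = c j • (fwdDiff (1:ℕ))^[ℓ] (fun x : ℕ ↦ (x:ℤ)^j) :=
          fun j _ => fwdDiff_iter_const_smul _ _ _ _
        rw [Finset.sum_congr rfl this, Finset.sum_apply]
        rw [Finset.sum_eq_single ℓ]
        · rw [fwdDiff_iter_pow_self]; simp [smul_eq_mul]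
        · intro j hj hjne
          rw [Finset.mem_Icc] at hj
          rcases lt_or_gt_of_ne hjne with hlt' | hgt'
          · rw [fwdDiff_iter_pow_lt hlt']; simp
          · -- j > ℓ : d j = 0 by IH
            have hdj : d j = 0 := by
              apply IH j (Finset.mem_Icc.mpr hj); omega
            simp [hc, hdj]
        · intro habs
          exact absurd (Finset.mem_Icc.mpr hℓ) habs
      have hdvd2 : (p:ℤ)^k ∣ c ℓ * (Nat.factorial ℓ : ℤ) := hΔf ▸ hdvdΔ ℓ
      -- convert to ℕ
      have hdvdn : p^k ∣ (p^ℓ * d ℓ) * Nat.factorial ℓ := by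
        have : ((p^k : ℕ) : ℤ) ∣ (((p^ℓ * d ℓ) * Nat.factorial ℓ : ℕ) : ℤ) := by
          push_cast
          convert hdvd2 using 1
        exact_mod_cast this
      have hcop : Nat.Coprime (p^k) (Nat.factorial ℓ) := by
        apply Nat.Coprime.pow_left
        rw [hp.coprime_iff_not_dvd]
        intro hdvd3
        have := (Nat.Prime.dvd_factorial hp).mp hdvd3
        omega
      have hdvd4 : p^k ∣ p^ℓ * d ℓ := hcop.dvd_of_dvd_mul_right hdvdn
      have hksplit : p^k = p^ℓ * p^(k-ℓ) := by
        rw [← pow_add]; congr 1; omega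
      have hdvd5 : p^(k-ℓ) ∣ d ℓ := by
        rw [hksplit] at hdvd4
        exact (mul_dvd_mul_iff_left (pow_ne_zero ℓ hp.pos.ne')).mp hdvd4
      exact Nat.eq_zero_of_dvd_of_lt hdvd5 (hd ℓ (Finset.mem_Icc.mpr hℓ))
  intro ℓ hℓ
  exact key k ℓ hℓ (by rw [Finset.mem_Icc] at hℓ; omega)
end

section
/- Let p be a prime. Then Pgr(ℤ/p²) is isomorphic to the iterated semidirect product ((ℤ/p)^p ⋊ ((ℤ/p)^×)^p) ⋊ S_p, where (ℤ/p)^× acts on ℤ/p coordinatewise by multiplication and S_p acts on both p-fold products by permuting coordinates. In particular |Pgr(ℤ/p²)| = p! · ((p−1)p)^p. -/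
set_option linter.unusedSectionVars false
set_option linter.unusedVariables false
set_option linter.unusedTactic false
set_option maxHeartbeats 1000000

open Polynomial Finset Multiplicative SemidirectProduct

namespace St18


variable (p : ℕ) [hp : Fact p.Prime]

def pr : ZMod (p^2) →+* ZMod p := ZMod.castHom (dvd_pow_self p two_ne_zero) (ZMod p)

def res (x : ZMod (p^2)) : Fin p := ⟨(pr p x).val, ZMod.val_lt _⟩

def quo (x : ZMod (p^2)) : ZMod p := ((x.val / p : ℕ) : ZMod p)

def mk' (r : Fin p) (m : ZMod p) : ZMod (p^2) :=
  ((r : ℕ) : ZMod (p^2)) + p * ((m.val : ℕ) : ZMod (p^2))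

lemma pr_apply (x : ZMod (p^2)) : pr p x = ((x.val : ℕ) : ZMod p) := by
  rw [pr, ZMod.castHom_apply, ← ZMod.natCast_val]

lemma res_val (x : ZMod (p^2)) : ((res p x : Fin p) : ℕ) = x.val % p := by
  show (pr p x).val = _
  rw [pr_apply, ZMod.val_natCast]

omit hp in
lemma psq_zero : ((p : ZMod (p^2)))^2 = 0 := by
  have := ZMod.natCast_self (p^2)
  push_cast at this
  exact this

/-- key: `p * ((n : ZMod p).val : ZMod p²) = p * n` -/
lemma pv (n : ℕ) : (p : ZMod (p^2)) * (((n : ZMod p).val : ℕ) : ZMod (p^2)) = p * n := by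
  rw [ZMod.val_natCast]
  conv_rhs => rw [← Nat.div_add_mod n p]
  push_cast
  linear_combination (-((n/p : ℕ) : ZMod (p^2))) * psq_zero p

lemma pv' (y : ZMod (p^2)) : (p : ZMod (p^2)) * (((pr p y).val : ℕ) : ZMod (p^2)) = p * y := by
  rw [pr_apply, pv, ZMod.natCast_rightInverse y]

lemma basePair_left (x : ZMod (p^2)) : mk' p (res p x) (quo p x) = x := by
  rw [mk', quo, pv p, res_val]
  have : ((x.val % p : ℕ) : ZMod (p^2)) + (p : ZMod (p^2)) * ((x.val / p : ℕ) : ZMod (p^2))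
      = ((x.val % p + p * (x.val / p) : ℕ) : ZMod (p^2)) := by push_cast; ring
  rw [this, Nat.mod_add_div, ZMod.natCast_rightInverse x]

lemma mk'_val (r : Fin p) (m : ZMod p) : (mk' p r m).val = (r : ℕ) + p * m.val := by
  have h1 : (r:ℕ) < p := r.isLt
  have h2 : m.val < p := ZMod.val_lt m
  have hlt : (r : ℕ) + p * m.val < p^2 := by
    calc (r:ℕ) + p * m.val < p + p * m.val := by omega
    _ = p * (m.val + 1) := by ring
    _ ≤ p * p := Nat.mul_le_mul_left p (by omega)
    _ = p^2 := (sq p).symm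
  have : mk' p r m = (((r : ℕ) + p * m.val : ℕ) : ZMod (p^2)) := by rw [mk']; push_cast; ring
  rw [this, ZMod.val_natCast, Nat.mod_eq_of_lt hlt]

lemma res_mk' (r : Fin p) (m : ZMod p) : res p (mk' p r m) = r := by
  apply Fin.ext
  rw [res_val, mk'_val, Nat.add_mul_mod_self_left, Nat.mod_eq_of_lt r.isLt]

lemma quo_mk' (r : Fin p) (m : ZMod p) : quo p (mk' p r m) = m := by
  rw [quo, mk'_val]
  have h1 : (r:ℕ) < p := r.isLt
  have : ((r : ℕ) + p * m.val) / p = m.val := by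
    rw [Nat.add_mul_div_left _ _ hp.out.pos, Nat.div_eq_of_lt h1]; omega
  rw [this, ZMod.natCast_rightInverse m]

/-- the base bijection `ℤ/p² ≃ Fin p × ℤ/p`. -/
def basePair : ZMod (p^2) ≃ Fin p × ZMod p where
  toFun x := (res p x, quo p x)
  invFun rm := mk' p rm.1 rm.2
  left_inv x := basePair_left p x
  right_inv rm := by cases rm with | mk r m => simp [res_mk', quo_mk']



lemma pow_sq_zero {A : Type*} [CommRing A] (y h : A) (hh : h * h = 0) (n : ℕ) :
    (y + h)^n = y^n + n * h * y^(n-1) := by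
  induction n with
  | zero => simp
  | succ n ih =>
    rw [pow_succ, ih]
    rcases n with _ | m
    · simp
    · simp only [Nat.add_sub_cancel]
      push_cast
      linear_combination ((m:A) + 1) * y^m * hh

lemma taylor_sq_zero {A : Type*} [CommRing A] (f : Polynomial A) (y h : A) (hh : h * h = 0) :
    f.eval (y + h) = f.eval y + h * f.derivative.eval y := by
  induction f using Polynomial.induction_on' with
  | add f g hf hg => simp [hf, hg]; ring
  | monomial n a =>
    rw [derivative_monomial, eval_monomial, eval_monomial, eval_monomial,
      pow_sq_zero y h hh n]
    push_cast
    ring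




def Nd (i : Fin p) : ZMod (p^2) := ((i : ℕ) : ZMod (p^2))

lemma node_unit {i j : Fin p} (hij : i ≠ j) : IsUnit (Nd p i - Nd p j) := by
  have key : ∀ a b : Fin p, (b:ℕ) < (a:ℕ) → IsUnit (Nd p a - Nd p b) := by
    intro a b hab
    have : Nd p a - Nd p b = (((a:ℕ) - (b:ℕ) : ℕ) : ZMod (p^2)) := by
      rw [Nd, Nd, Nat.cast_sub hab.le]
    rw [this, ZMod.isUnit_iff_coprime]
    have h1 : ¬ p ∣ ((a:ℕ) - (b:ℕ)) := by
      intro hdvd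
      have := Nat.le_of_dvd (by omega) hdvd
      omega
    exact ((Nat.Prime.coprime_iff_not_dvd hp.out).mpr h1).symm.pow_right 2
  rcases lt_or_gt_of_ne (fun h => hij (Fin.ext_iff.mpr h) : (i:ℕ) ≠ (j:ℕ)) with h | h
  · have := key j i h
    rw [show Nd p j - Nd p i = -(Nd p i - Nd p j) by ring] at this
    exact (IsUnit.neg_iff _).mp this
  · exact key i j h

/-- Lagrange basis polynomial -/
noncomputable def Lb (i : Fin p) : Polynomial (ZMod (p^2)) :=
  ∏ j ∈ univ.erase i, (C (Ring.inverse (Nd p i - Nd p j)) * (X - C (Nd p j)))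

lemma Lb_self (i : Fin p) : (Lb p i).eval (Nd p i) = 1 := by
  rw [Lb, eval_prod]
  apply Finset.prod_eq_one
  intro j hj
  have hij : i ≠ j := fun h => (Finset.mem_erase.mp hj).1 h.symm
  simp only [eval_mul, eval_C, eval_sub, eval_X]
  exact Ring.inverse_mul_cancel _ (node_unit p hij)

lemma Lb_other {i k : Fin p} (hk : k ≠ i) : (Lb p k).eval (Nd p i) = 0 := by
  rw [Lb, eval_prod]
  apply Finset.prod_eq_zero (Finset.mem_erase.mpr ⟨fun h => hk h.symm, Finset.mem_univ i⟩)
  simp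

/-- derivative-correction basis polynomial -/
noncomputable def Kb (i : Fin p) : Polynomial (ZMod (p^2)) :=
  (X - C (Nd p i)) * (Lb p i)^2

lemma Kb_eval (i k : Fin p) : (Kb p k).eval (Nd p i) = 0 := by
  rcases eq_or_ne k i with rfl | h
  · simp [Kb]
  · simp [Kb, Lb_other p h]

lemma Kb_deriv (i k : Fin p) :
    (derivative (Kb p k)).eval (Nd p i) = if k = i then 1 else 0 := by
  rw [Kb, derivative_mul, derivative_pow]
  simp only [derivative_sub, derivative_X, derivative_C, sub_zero, one_mul, eval_add,
    eval_mul, eval_sub, eval_X, eval_C, eval_pow, eval_mul]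
  rcases eq_or_ne k i with rfl | h
  · simp [Lb_self]
  · simp [Lb_other p h, h]

lemma corr_eval (c : Fin p → ZMod (p^2)) (i : Fin p) :
    (∑ k, C (c k) * Kb p k).eval (Nd p i) = 0 := by
  rw [eval_finset_sum]
  apply Finset.sum_eq_zero
  intro k _
  simp [Kb_eval]

lemma corr_deriv (c : Fin p → ZMod (p^2)) (i : Fin p) :
    (derivative (∑ k, C (c k) * Kb p k)).eval (Nd p i) = c i := by
  rw [derivative_sum]
  simp only [derivative_C_mul]
  rw [eval_finset_sum, Finset.sum_eq_single i]
  · simp [Kb_deriv]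
  · intro k _ hk; simp [Kb_deriv, hk]
  · intro h; exact absurd (Finset.mem_univ i) h

lemma lag_eval (v : Fin p → ZMod (p^2)) (i : Fin p) :
    (∑ k, C (v k) * Lb p k).eval (Nd p i) = v i := by
  rw [eval_finset_sum, Finset.sum_eq_single i]
  · simp [Lb_self]
  · intro k _ hk; simp [Lb_other p hk]
  · intro h; exact absurd (Finset.mem_univ i) h

/-- Hermite interpolation at the nodes `0,…,p-1` of `ZMod p²`. -/
lemma hermite (v d : Fin p → ZMod (p^2)) :
    ∃ f : Polynomial (ZMod (p^2)),
      (∀ i, f.eval (Nd p i) = v i) ∧ (∀ i, (derivative f).eval (Nd p i) = d i) := by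
  refine ⟨(∑ k, C (v k) * Lb p k) +
      ∑ k, C (d k - (derivative (∑ j, C (v j) * Lb p j)).eval (Nd p k)) * Kb p k,
      fun i => ?_, fun i => ?_⟩
  · rw [eval_add, lag_eval, corr_eval, add_zero]
  · rw [derivative_add, eval_add, corr_deriv]
    ring




/-- the action of units on translations, coordinatewise -/
def phi : (Fin p → (ZMod p)ˣ) →* MulAut (Multiplicative (Fin p → ZMod p)) where
  toFun u :=
    { toFun := fun a => ofAdd fun i => (u i : ZMod p) * (toAdd a) i
      invFun := fun a => ofAdd fun i => ((u i)⁻¹ : (ZMod p)ˣ) * (toAdd a) i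
      left_inv := fun a => by
        apply congrArg ofAdd; funext i; exact Units.inv_mul_cancel_left (u i) _
      right_inv := fun a => by
        apply congrArg ofAdd; funext i; exact Units.mul_inv_cancel_left (u i) _
      map_mul' := fun a b => by
        apply congrArg ofAdd; funext i
        exact mul_add ((u i : ZMod p)) ((toAdd a) i) ((toAdd b) i) }
  map_one' := by
    apply MulEquiv.ext; intro a
    apply congrArg ofAdd; funext i; exact one_mul _
  map_mul' := fun u v => by
    apply MulEquiv.ext; intro a
    apply congrArg ofAdd; funext i
    show ((u i : ZMod p) * (v i : ZMod p)) * (toAdd a) i = (u i : ZMod p) * ((v i : ZMod p) * (toAdd a) i)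
    ring

abbrev SDP := SemidirectProduct (Multiplicative (Fin p → ZMod p)) (Fin p → (ZMod p)ˣ) (phi p)

def psiFun (σ : Equiv.Perm (Fin p)) (x : SDP p) : SDP p :=
  ⟨ofAdd fun i => (toAdd x.left) (σ⁻¹ i), fun i => x.right (σ⁻¹ i)⟩

lemma psiFun_left (σ : Equiv.Perm (Fin p)) (x : SDP p) :
    (psiFun p σ x).left = ofAdd fun i => (toAdd x.left) (σ⁻¹ i) := rfl

lemma psiFun_right (σ : Equiv.Perm (Fin p)) (x : SDP p) :
    (psiFun p σ x).right = fun i => x.right (σ⁻¹ i) := rfl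

lemma psiFun_mul (σ : Equiv.Perm (Fin p)) (x y : SDP p) :
    psiFun p σ (x * y) = psiFun p σ x * psiFun p σ y := rfl

lemma psiFun_comp (σ τ : Equiv.Perm (Fin p)) (x : SDP p) :
    psiFun p σ (psiFun p τ x) = psiFun p (σ * τ) x := by
  apply SemidirectProduct.ext
  · apply congrArg ofAdd; funext i
    show (toAdd x.left) (τ⁻¹ (σ⁻¹ i)) = (toAdd x.left) ((σ * τ)⁻¹ i)
    rw [mul_inv_rev, Equiv.Perm.mul_apply]
  · funext i
    show x.right (τ⁻¹ (σ⁻¹ i)) = x.right ((σ * τ)⁻¹ i)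
    rw [mul_inv_rev, Equiv.Perm.mul_apply]

lemma psiFun_one (x : SDP p) : psiFun p 1 x = x := by
  apply SemidirectProduct.ext
  · apply congrArg ofAdd; funext i; rfl
  · rfl

/-- the action of `S_p` on the inner semidirect product, permuting coordinates -/
def psi : Equiv.Perm (Fin p) →* MulAut (SDP p) where
  toFun σ :=
    { toFun := psiFun p σ
      invFun := psiFun p σ⁻¹
      left_inv := fun x => by rw [psiFun_comp, inv_mul_cancel, psiFun_one]
      right_inv := fun x => by rw [psiFun_comp, mul_inv_cancel, psiFun_one]
      map_mul' := psiFun_mul p σ }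
  map_one' := by apply MulEquiv.ext; intro x; exact psiFun_one p x
  map_mul' := fun σ τ => by
    apply MulEquiv.ext; intro x
    exact (psiFun_comp p σ τ x).symm

abbrev TGrp := SemidirectProduct (SDP p) (Equiv.Perm (Fin p)) (psi p)

/-- translation part, as permutations of `Fin p × ZMod p` -/
def hA : Multiplicative (Fin p → ZMod p) →* Equiv.Perm (Fin p × ZMod p) where
  toFun a := Equiv.prodShear (Equiv.refl _) (fun r => Equiv.addRight ((toAdd a) r))
  map_one' := by apply Equiv.ext; rintro ⟨r, m⟩; show (r, m + 0) = (r, m); rw [add_zero]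
  map_mul' := fun a b => by
    apply Equiv.ext; rintro ⟨r, m⟩
    show (r, m + ((toAdd a) r + (toAdd b) r)) = (r, m + (toAdd b) r + (toAdd a) r)
    rw [Prod.mk.injEq]
    exact ⟨rfl, by ring⟩

/-- unit-multiplication part -/
def hU : (Fin p → (ZMod p)ˣ) →* Equiv.Perm (Fin p × ZMod p) where
  toFun u := Equiv.prodShear (Equiv.refl _) (fun r => Equiv.mulLeft₀ (u r : ZMod p) (Units.ne_zero _))
  map_one' := by apply Equiv.ext; rintro ⟨r, m⟩; show (r, (1:ZMod p) * m) = (r, m); rw [one_mul]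
  map_mul' := fun u v => by
    apply Equiv.ext; rintro ⟨r, m⟩
    show (r, ((u r : ZMod p) * (v r : ZMod p)) * m) = (r, (u r : ZMod p) * ((v r : ZMod p) * m))
    rw [mul_assoc]

/-- coordinate-permutation part -/
def hS : Equiv.Perm (Fin p) →* Equiv.Perm (Fin p × ZMod p) where
  toFun σ := Equiv.prodCongr σ (Equiv.refl _)
  map_one' := by apply Equiv.ext; rintro ⟨r, m⟩; rfl
  map_mul' := fun σ τ => by apply Equiv.ext; rintro ⟨r, m⟩; rfl

lemma hA_apply (a : Multiplicative (Fin p → ZMod p)) (r : Fin p) (m : ZMod p) :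
    hA p a (r, m) = (r, m + (toAdd a) r) := rfl

lemma hU_apply (u : Fin p → (ZMod p)ˣ) (r : Fin p) (m : ZMod p) :
    hU p u (r, m) = (r, (u r : ZMod p) * m) := rfl

lemma hS_apply (σ : Equiv.Perm (Fin p)) (r : Fin p) (m : ZMod p) :
    hS p σ (r, m) = (σ r, m) := rfl

lemma compat1 : ∀ u : Fin p → (ZMod p)ˣ,
    (hA p).comp ((phi p) u).toMonoidHom = (MulAut.conj ((hU p) u)).toMonoidHom.comp (hA p) := by
  intro u
  apply MonoidHom.ext; intro a
  apply Equiv.ext; rintro ⟨r, m⟩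
  show (r, m + (u r : ZMod p) * (toAdd a) r) = (hU p u) ((hA p a) (((hU p u)⁻¹) (r, m)))
  have hinv : ((hU p u)⁻¹) (r, m) = (r, ((u r)⁻¹ : (ZMod p)ˣ) * m) := by
    apply (hU p u).injective
    rw [← Equiv.Perm.mul_apply, mul_inv_cancel, Equiv.Perm.one_apply, hU_apply]
    rw [Prod.mk.injEq]
    exact ⟨rfl, (Units.mul_inv_cancel_left (u r) m).symm ▸ rfl⟩
  rw [hinv, hA_apply, hU_apply, Prod.mk.injEq]
  refine ⟨rfl, ?_⟩
  rw [mul_add, Units.mul_inv_cancel_left]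

def hAU : SDP p →* Equiv.Perm (Fin p × ZMod p) :=
  SemidirectProduct.lift (hA p) (hU p) (compat1 p)

lemma hAU_apply (x : SDP p) (r : Fin p) (m : ZMod p) :
    hAU p x (r, m) = (r, (x.right r : ZMod p) * m + (toAdd x.left) r) := by
  rw [← SemidirectProduct.inl_left_mul_inr_right x, map_mul]
  rw [hAU, SemidirectProduct.lift_inl, SemidirectProduct.lift_inr]
  show hA p _ (hU p _ (r, m)) = _
  rw [hU_apply, hA_apply]
  simp

lemma compat2 : ∀ σ : Equiv.Perm (Fin p),
    (hAU p).comp ((psi p) σ).toMonoidHom = (MulAut.conj ((hS p) σ)).toMonoidHom.comp (hAU p) := by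
  intro σ
  apply MonoidHom.ext; intro x
  apply Equiv.ext; rintro ⟨r, m⟩
  show hAU p (psiFun p σ x) (r, m) = (hS p σ) ((hAU p x) (((hS p σ)⁻¹) (r, m)))
  have hinv : ((hS p σ)⁻¹) (r, m) = (σ⁻¹ r, m) := by
    apply (hS p σ).injective
    rw [← Equiv.Perm.mul_apply, mul_inv_cancel, Equiv.Perm.one_apply, hS_apply,
      ← Equiv.Perm.mul_apply, mul_inv_cancel, Equiv.Perm.one_apply]
  rw [hinv, hAU_apply, hAU_apply, hS_apply]
  simp [psiFun]

def thetaPair : TGrp p →* Equiv.Perm (Fin p × ZMod p) :=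
  SemidirectProduct.lift (hAU p) (hS p) (compat2 p)

lemma thetaPair_apply (x : TGrp p) (r : Fin p) (m : ZMod p) :
    thetaPair p x (r, m) =
      (x.right r, (x.left.right (x.right r) : ZMod p) * m + (toAdd x.left.left) (x.right r)) := by
  rw [← SemidirectProduct.inl_left_mul_inr_right x, map_mul]
  rw [thetaPair, SemidirectProduct.lift_inl, SemidirectProduct.lift_inr]
  show hAU p _ (hS p _ (r, m)) = _
  rw [hS_apply, hAU_apply]
  simp

lemma thetaPair_injective : Function.Injective (thetaPair p) := by
  rw [injective_iff_map_eq_one]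
  intro x hx
  have happ : ∀ r m, thetaPair p x (r, m) = (r, m) := by
    intro r m; rw [hx]; rfl
  have hσ : x.right = 1 := by
    apply Equiv.ext; intro r
    have := happ r 0
    rw [thetaPair_apply] at this
    exact (Prod.mk.injEq _ _ _ _).mp this |>.1
  have ha : (toAdd x.left.left) = 0 := by
    funext r
    have := happ r 0
    rw [thetaPair_apply, hσ] at this
    have h2 := (Prod.mk.injEq _ _ _ _).mp this |>.2
    simpa using h2
  have hu : x.left.right = 1 := by
    funext r
    have := happ r 1
    rw [thetaPair_apply, hσ] at this
    have h2 := (Prod.mk.injEq _ _ _ _).mp this |>.2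
    show x.left.right r = 1
    apply Units.ext
    have : (x.left.right r : ZMod p) * 1 + (toAdd x.left.left) r = 1 := by simpa using h2
    rw [ha] at this
    simpa using this
  have hleft : x.left = 1 := by
    apply SemidirectProduct.ext
    · show x.left.left = 1
      have : x.left.left = ofAdd (toAdd x.left.left) := rfl
      rw [this, ha]; rfl
    · exact hu
  apply SemidirectProduct.ext
  · exact hleft
  · exact hσ




/-- conjugation of permutation groups by an equiv, as a `MulEquiv` -/
def permConj {α β : Type*} (e : α ≃ β) : Equiv.Perm α ≃* Equiv.Perm β where
  toFun σ := (e.symm.trans σ).trans e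
  invFun τ := (e.trans τ).trans e.symm
  left_inv σ := by apply Equiv.ext; intro x; simp
  right_inv τ := by apply Equiv.ext; intro x; simp
  map_mul' σ τ := by apply Equiv.ext; intro x; simp

lemma permConj_apply {α β : Type*} (e : α ≃ β) (σ : Equiv.Perm α) (y : β) :
    permConj e σ y = e (σ (e.symm y)) := rfl


def theta : TGrp p →* Equiv.Perm (ZMod (p^2)) :=
  (permConj (basePair p).symm).toMonoidHom.comp (thetaPair p)

lemma theta_injective : Function.Injective (theta p) :=
  fun x y h => thetaPair_injective p ((permConj (basePair p).symm).injective h)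

lemma theta_apply (x : TGrp p) (y : ZMod (p^2)) :
    theta p x y = mk' p (x.right (res p y))
      ((x.left.right (x.right (res p y)) : ZMod p) * quo p y
        + (toAdd x.left.left) (x.right (res p y))) := by
  show (basePair p).symm (thetaPair p x ((basePair p).symm.symm y)) = _
  rw [Equiv.symm_symm]
  show (basePair p).symm (thetaPair p x (res p y, quo p y)) = _
  rw [thetaPair_apply]
  rfl

lemma quo_val (y : ZMod (p^2)) : ((quo p y).val : ℕ) = y.val / p := by
  have hlt : y.val / p < p := by
    have h1 : y.val < p^2 := ZMod.val_lt y
    have h2 : p^2 = p * p := sq p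
    exact Nat.div_lt_of_lt_mul (by omega)
  rw [quo, ZMod.val_natCast, Nat.mod_eq_of_lt hlt]

lemma decomp (y : ZMod (p^2)) :
    y = Nd p (res p y) + (p : ZMod (p^2)) * ((y.val / p : ℕ) : ZMod (p^2)) := by
  conv_lhs => rw [← basePair_left p y]
  show mk' p (res p y) (quo p y) = _
  rw [mk']
  congr 2
  rw [quo_val]

lemma hsq (c : ℕ) :
    ((p : ZMod (p^2)) * (c : ZMod (p^2))) * ((p : ZMod (p^2)) * (c : ZMod (p^2))) = 0 := by
  linear_combination ((c : ZMod (p^2))^2) * psq_zero p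

lemma eval_fiber (f : Polynomial (ZMod (p^2))) (y : ZMod (p^2)) :
    f.eval y = f.eval (Nd p (res p y)) +
      ((p : ZMod (p^2)) * ((y.val / p : ℕ) : ZMod (p^2)))
        * (derivative f).eval (Nd p (res p y)) := by
  conv_lhs => rw [decomp p y]
  rw [taylor_sq_zero f _ _ (hsq p _)]

lemma padd (z w : ZMod p) :
    (p : ZMod (p^2)) * (((z + w).val : ℕ) : ZMod (p^2)) =
      (p : ZMod (p^2)) * ((z.val : ℕ) : ZMod (p^2)) +
        (p : ZMod (p^2)) * ((w.val : ℕ) : ZMod (p^2)) := by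
  have h : z + w = ((z.val + w.val : ℕ) : ZMod p) := by
    push_cast
    rw [ZMod.natCast_rightInverse z, ZMod.natCast_rightInverse w]
  rw [h, pv]
  push_cast
  ring

lemma pmul (z w : ZMod p) :
    (p : ZMod (p^2)) * (((z * w).val : ℕ) : ZMod (p^2)) =
      (p : ZMod (p^2)) * ((z.val : ℕ) : ZMod (p^2)) * ((w.val : ℕ) : ZMod (p^2)) := by
  have h : z * w = ((z.val * w.val : ℕ) : ZMod p) := by
    push_cast
    rw [ZMod.natCast_rightInverse z, ZMod.natCast_rightInverse w]
  rw [h, pv]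
  push_cast
  ring

lemma mk'_eq (r : Fin p) (m : ZMod p) :
    mk' p r m = Nd p r + (p : ZMod (p^2)) * ((m.val : ℕ) : ZMod (p^2)) := rfl

lemma memA (a : Fin p → ZMod p) :
    theta p (inl (inl (ofAdd a))) ∈ PolyPerms (ZMod (p^2)) := by
  obtain ⟨g, hg, -⟩ := hermite p (fun i => (((a i).val : ℕ) : ZMod (p^2))) 0
  refine ⟨X + C ((p : ℕ) : ZMod (p^2)) * g, fun y => ?_⟩
  rw [theta_apply]
  simp only [left_inl, right_inl, Equiv.Perm.one_apply, Pi.one_apply, Units.val_one, one_mul,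
    toAdd_ofAdd]
  rw [mk'_eq, padd, quo_val]
  rw [eval_add, eval_mul, eval_C, eval_X, eval_fiber p g y, hg]
  have h4 := decomp p y
  linear_combination -h4 - (((y.val / p : ℕ) : ZMod (p^2)) *
    (derivative g).eval (Nd p (res p y))) * psq_zero p

lemma memU (u : Fin p → (ZMod p)ˣ) :
    theta p (inl (inr u)) ∈ PolyPerms (ZMod (p^2)) := by
  obtain ⟨f, hf, hf'⟩ := hermite p (fun i => Nd p i)
    (fun i => (((u i : ZMod p).val : ℕ) : ZMod (p^2)))
  refine ⟨f, fun y => ?_⟩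
  rw [theta_apply]
  simp only [left_inl, right_inl, left_inr, right_inr, Equiv.Perm.one_apply, toAdd_one,
    Pi.zero_apply, add_zero]
  rw [mk'_eq, pmul, quo_val]
  rw [eval_fiber p f y, hf, hf']
  ring

lemma memS (σ : Equiv.Perm (Fin p)) :
    theta p (inr σ) ∈ PolyPerms (ZMod (p^2)) := by
  obtain ⟨f, hf, hf'⟩ := hermite p (fun i => Nd p (σ i)) (fun _ => 1)
  refine ⟨f, fun y => ?_⟩
  rw [theta_apply]
  simp only [left_inr, right_inr, one_left, one_right, Pi.one_apply, Units.val_one, one_mul,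
    toAdd_one, Pi.zero_apply, add_zero]
  rw [mk'_eq, quo_val]
  rw [eval_fiber p f y, hf, hf']
  ring

lemma theta_mem_Pgr (x : TGrp p) : theta p x ∈ Pgr (ZMod (p^2)) := by
  have hx : x = inl (inl (ofAdd (toAdd x.left.left))) * inl (inr x.left.right) * inr x.right := by
    rw [show (ofAdd (toAdd x.left.left)) = x.left.left from rfl]
    rw [← map_mul, inl_left_mul_inr_right, inl_left_mul_inr_right]
  rw [hx, map_mul, map_mul]
  exact mul_mem (mul_mem (Subgroup.subset_closure (memA p _))
    (Subgroup.subset_closure (memU p _))) (Subgroup.subset_closure (memS p _))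

lemma res_eq_of_pr {x y : ZMod (p^2)} (h : pr p x = pr p y) : res p x = res p y := by
  apply Fin.ext
  show (pr p x).val = (pr p y).val
  rw [h]

lemma pr_p : pr p ((p : ℕ) : ZMod (p^2)) = 0 := by
  rw [map_natCast, ZMod.natCast_self]

lemma Nd_eq_mk' (k : Fin p) : Nd p k = mk' p k 0 := by
  rw [mk'_eq]
  simp

lemma res_Nd (k : Fin p) : res p (Nd p k) = k := by rw [Nd_eq_mk', res_mk']

lemma p_mul_eq_zero {z : ZMod (p^2)} (h : pr p z = 0) : (p : ZMod (p^2)) * z = 0 := by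
  have hz : z = ((z.val : ℕ) : ZMod (p^2)) := (ZMod.natCast_rightInverse z).symm
  rw [pr_apply] at h
  obtain ⟨t, ht⟩ := (ZMod.natCast_eq_zero_iff _ _).mp h
  rw [hz, ht]
  push_cast
  linear_combination ((t : ZMod (p^2))) * psq_zero p

lemma p_ne_zero : ((p : ℕ) : ZMod (p^2)) ≠ 0 := by
  intro h
  have := (ZMod.natCast_eq_zero_iff p (p^2)).mp h
  have h2 := Nat.le_of_dvd hp.out.pos this
  have h3 := hp.out.two_le
  nlinarith [sq p]

lemma polyPerms_subset_range : PolyPerms (ZMod (p^2)) ⊆ ((theta p).range : Set (Equiv.Perm (ZMod (p^2)))) := by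
  rintro F ⟨f, hF⟩
  -- fiber formula for F
  have hfib : ∀ y : ZMod (p^2), F y = F (Nd p (res p y)) +
      ((p : ZMod (p^2)) * ((y.val / p : ℕ) : ZMod (p^2)))
        * (derivative f).eval (Nd p (res p y)) := by
    intro y
    rw [hF, hF, eval_fiber p f y]
  -- residue of F y only depends on residue of y
  have hres : ∀ y : ZMod (p^2), res p (F y) = res p (F (Nd p (res p y))) := by
    intro y
    apply res_eq_of_pr
    rw [hfib y]
    rw [map_add, map_mul, map_mul, pr_p, zero_mul, zero_mul, add_zero]
  set s : Fin p → Fin p := fun i => res p (F (Nd p i)) with hs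
  have hssurj : Function.Surjective s := by
    intro k
    refine ⟨res p (F.symm (Nd p k)), ?_⟩
    show res p (F (Nd p (res p (F.symm (Nd p k))))) = k
    rw [← hres (F.symm (Nd p k)), Equiv.apply_symm_apply, res_Nd]
  have hsbij : Function.Bijective s := ⟨Finite.injective_iff_surjective.mpr hssurj, hssurj⟩
  set σ : Equiv.Perm (Fin p) := Equiv.ofBijective s hsbij with hσ
  -- derivative values are units
  have hunit : ∀ i : Fin p, pr p ((derivative f).eval (Nd p i)) ≠ 0 := by
    intro i h0
    have hpz : (p : ZMod (p^2)) * (derivative f).eval (Nd p i) = 0 := p_mul_eq_zero p h0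
    have hpp : ((p : ZMod (p^2))) * ((p : ZMod (p^2))) = 0 := by
      linear_combination psq_zero p
    have hFF : F (Nd p i + (p : ZMod (p^2))) = F (Nd p i) := by
      rw [hF, hF, taylor_sq_zero f _ _ hpp, hpz, add_zero]
    have := F.injective hFF
    have hp0 : ((p : ℕ) : ZMod (p^2)) = 0 := by linear_combination this
    exact p_ne_zero p hp0
  set u : Fin p → (ZMod p)ˣ :=
    fun k => Units.mk0 (pr p ((derivative f).eval (Nd p (σ.symm k)))) (hunit _) with hu0
  set a : Fin p → ZMod p := fun k => quo p (F (Nd p (σ.symm k))) with ha0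
  refine ⟨⟨⟨ofAdd a, u⟩, σ⟩, ?_⟩
  apply Equiv.ext
  intro y
  rw [theta_apply]
  show mk' p (σ (res p y)) ((u (σ (res p y)) : ZMod p) * quo p y + a (σ (res p y))) = F y
  have hσr : σ.symm (σ (res p y)) = res p y := Equiv.symm_apply_apply σ _
  have hu : (u (σ (res p y)) : ZMod p)
      = pr p ((derivative f).eval (Nd p (res p y))) := by
    show pr p ((derivative f).eval (Nd p (σ.symm (σ (res p y))))) = _
    rw [hσr]
  have ha : a (σ (res p y)) = quo p (F (Nd p (res p y))) := by
    show quo p (F (Nd p (σ.symm (σ (res p y))))) = _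
    rw [hσr]
  have hFN : F (Nd p (res p y)) = mk' p (σ (res p y)) (quo p (F (Nd p (res p y)))) := by
    conv_lhs => rw [← basePair_left p (F (Nd p (res p y)))]
    rfl
  rw [hu, ha, mk'_eq, padd, pmul, quo_val]
  conv_rhs => rw [hfib y, hFN, mk'_eq]
  linear_combination ((y.val / p : ℕ) : ZMod (p^2)) *
    pv' p ((derivative f).eval (Nd p (res p y)))

lemma range_eq_Pgr : (theta p).range = Pgr (ZMod (p^2)) := by
  apply le_antisymm
  · rintro F ⟨t, rfl⟩
    exact theta_mem_Pgr p t
  · rw [Pgr]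
    exact (Subgroup.closure_le _).mpr (polyPerms_subset_range p)

noncomputable def isoT : TGrp p ≃* Pgr (ZMod (p^2)) := by
  refine MulEquiv.ofBijective
    ((theta p).codRestrict (Pgr (ZMod (p^2))) (theta_mem_Pgr p)) ⟨?_, ?_⟩
  · intro x y h
    exact theta_injective p (congrArg Subtype.val h)
  · rintro ⟨F, hF⟩
    have hmem : F ∈ (theta p).range := by rw [range_eq_Pgr]; exact hF
    obtain ⟨t, ht⟩ := hmem
    exact ⟨t, Subtype.ext ht⟩

def sdpEquivProd (N G : Type*) [Group N] [Group G] (φ₀ : G →* MulAut N) :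
    SemidirectProduct N G φ₀ ≃ N × G where
  toFun x := (x.left, x.right)
  invFun nm := ⟨nm.1, nm.2⟩
  left_inv x := rfl
  right_inv nm := rfl

lemma card_TGrp : Nat.card (TGrp p) = p.factorial * ((p - 1) * p) ^ p := by
  have h1 : Nat.card (Multiplicative (Fin p → ZMod p)) = p ^ p := by
    rw [Nat.card_congr (Multiplicative.toAdd (α := Fin p → ZMod p)), Nat.card_pi]
    simp [Nat.card_zmod]
  have h2 : Nat.card (Fin p → (ZMod p)ˣ) = (p - 1) ^ p := by
    rw [Nat.card_pi]
    simp [Nat.card_eq_fintype_card, ZMod.card_units, Nat.totient_prime hp.out]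
  have h3 : Nat.card (Equiv.Perm (Fin p)) = p.factorial := by
    rw [Nat.card_eq_fintype_card]
    simp [Fintype.card_perm]
  rw [show (TGrp p) = SemidirectProduct (SDP p) (Equiv.Perm (Fin p)) (psi p) from rfl]
  rw [Nat.card_congr (sdpEquivProd _ _ _), Nat.card_prod,
      Nat.card_congr (sdpEquivProd _ _ _), Nat.card_prod, h1, h2, h3, mul_pow]
  ring


end St18

/-- `Pgr (ℤ/p²) ≅ ((ℤ/p)^p ⋊ ((ℤ/p)ˣ)^p) ⋊ S_p`, where the units act coordinatewise by
multiplication and `S_p` permutes coordinates; in particular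
`|Pgr (ℤ/p²)| = p!·((p-1)p)^p`. -/
theorem stmt18 (p : ℕ) [Fact p.Prime] :
    ∃ (φ : (Fin p → (ZMod p)ˣ) →* MulAut (Multiplicative (Fin p → ZMod p)))
      (ψ : Equiv.Perm (Fin p) →*
        MulAut (SemidirectProduct (Multiplicative (Fin p → ZMod p)) (Fin p → (ZMod p)ˣ) φ)),
      (∀ (u : Fin p → (ZMod p)ˣ) (a : Fin p → ZMod p),
        φ u (Multiplicative.ofAdd a) = Multiplicative.ofAdd fun i => (u i : ZMod p) * a i) ∧
      (∀ (σ : Equiv.Perm (Fin p))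
          (x : SemidirectProduct (Multiplicative (Fin p → ZMod p)) (Fin p → (ZMod p)ˣ) φ),
        (ψ σ x).left = Multiplicative.ofAdd (fun i => Multiplicative.toAdd x.left (σ⁻¹ i)) ∧
        (ψ σ x).right = fun i => x.right (σ⁻¹ i)) ∧
      Nonempty (Pgr (ZMod (p ^ 2)) ≃*
        SemidirectProduct
          (SemidirectProduct (Multiplicative (Fin p → ZMod p)) (Fin p → (ZMod p)ˣ) φ)
          (Equiv.Perm (Fin p)) ψ) ∧
      Nat.card (Pgr (ZMod (p ^ 2))) = p.factorial * ((p - 1) * p) ^ p := by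
  refine ⟨St18.phi p, St18.psi p, fun u a => rfl, fun σ x => ⟨rfl, rfl⟩,
    ⟨(St18.isoT p).symm⟩, ?_⟩
  rw [Nat.card_congr (St18.isoT p).symm.toEquiv]
  exact St18.card_TGrp p
end
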